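/- arXiv:2507.04007 — 8 statements merged into one kernel-verified Lean document; each statement's English description precedes it below -/
import Mathlib

section
/- For all positive integers m, n, r, s, one has N(m,n)^(r·s) ≤ N(r·m + r − 1, s·n + s − 1). (Splicing method (2): r·s disjoint m×n grids assembled in r rows and s columns, separated by rows and columns of unselected vertices, yield independent sets of the (rm+r−1)×(sn+s−1) grid graph, and this assembly map is injective.) -/
open SimpleGraph Filter Real Topology

open Classical in
/-- Number of independent sets (vertex subsets with no two adjacent vertices,
the empty set included) of a finite simple graph. -/
noncomputable def numIndep {V : Type*} [Fintype V] (G : SimpleGraph V) : ℕ :=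
  (Finset.univ.filter fun s : Finset V => ∀ u ∈ s, ∀ v ∈ s, ¬ G.Adj u v).card

/-- `N(m,n)`: number of independent sets of the `m × n` grid graph, the box
product of the path graphs on `m` and `n` vertices. -/
noncomputable def gridN (m n : ℕ) : ℕ :=
  numIndep (pathGraph m □ pathGraph n)

namespace GridSplice

lemma uniq {k i i' a a' : ℕ} (ha : a < k) (ha' : a' < k)
    (h : a + i * k = a' + i' * k) : i = i' ∧ a = a' := by
  have h1 := congrArg (· % k) h
  simp only [Nat.add_mul_mod_self_right] at h1
  rw [Nat.mod_eq_of_lt ha, Nat.mod_eq_of_lt ha'] at h1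
  subst h1
  have hk : 0 < k := lt_of_le_of_lt (Nat.zero_le _) ha
  refine ⟨Nat.eq_of_mul_eq_mul_right hk (by omega), rfl⟩

/-- Embed the `i`-th copy of `Fin m` into `Fin (r*m + r - 1)`. -/
def enc {m r : ℕ} (i : Fin r) (a : Fin m) : Fin (r * m + r - 1) :=
  ⟨a.val + i.val * (m + 1), by
    have h1 : a.val + 1 ≤ m := a.isLt
    have h2 : i.val + 1 ≤ r := i.isLt
    have h3 : (i.val + 1) * (m + 1) ≤ r * (m + 1) := Nat.mul_le_mul_right _ h2
    have h4 : r * (m + 1) = r * m + r := by ring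
    have h5 : (i.val + 1) * (m + 1) = i.val * (m + 1) + (m + 1) := by ring
    have h6 : 1 ≤ r * m := Nat.one_le_iff_ne_zero.mpr
      (Nat.mul_ne_zero (by omega) (by omega))
    omega⟩

lemma enc_inj {m r : ℕ} {i i' : Fin r} {a a' : Fin m}
    (h : enc i a = enc i' a') : i = i' ∧ a = a' := by
  have hv : a.val + i.val * (m + 1) = a'.val + i'.val * (m + 1) :=
    congrArg Fin.val h
  obtain ⟨h1, h2⟩ := uniq (k := m + 1) (by omega) (by omega) hv
  exact ⟨Fin.ext h1, Fin.ext h2⟩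

lemma enc_adj {m r : ℕ} {i i' : Fin r} {a a' : Fin m}
    (h : (pathGraph (r * m + r - 1)).Adj (enc i a) (enc i' a')) :
    i = i' ∧ (pathGraph m).Adj a a' := by
  rw [pathGraph_adj] at h
  have ham : a.val < m := a.isLt
  have ham' : a'.val < m := a'.isLt
  rcases h with h | h
  · have hv : (a.val + 1) + i.val * (m + 1) = a'.val + i'.val * (m + 1) := by
      have := h; simp only [enc] at this; omega
    obtain ⟨h1, h2⟩ := uniq (k := m + 1) (by omega) (by omega) hv
    exact ⟨Fin.ext h1, pathGraph_adj.mpr (Or.inl h2)⟩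
  · have hv : (a'.val + 1) + i'.val * (m + 1) = a.val + i.val * (m + 1) := by
      have := h; simp only [enc] at this; omega
    obtain ⟨h1, h2⟩ := uniq (k := m + 1) (by omega) (by omega) hv
    exact ⟨Fin.ext h1.symm, pathGraph_adj.mpr (Or.inr h2)⟩

end GridSplice

open GridSplice in
set_option maxHeartbeats 1000000 in
theorem grid_indep_count_splice (m n r s : ℕ) (hm : 0 < m) (hn : 0 < n)
    (hr : 0 < r) (hs : 0 < s) :
    gridN m n ^ (r * s) ≤ gridN (r * m + r - 1) (s * n + s - 1) := by
  classical
  set M := r * m + r - 1 with hM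
  set N := s * n + s - 1 with hN
  set A : Finset (Finset (Fin m × Fin n)) :=
    Finset.univ.filter fun t => ∀ u ∈ t, ∀ v ∈ t, ¬ (pathGraph m □ pathGraph n).Adj u v with hA
  set B : Finset (Finset (Fin M × Fin N)) :=
    Finset.univ.filter fun t => ∀ u ∈ t, ∀ v ∈ t, ¬ (pathGraph M □ pathGraph N).Adj u v with hB
  -- the global embedding of vertices
  set E : (Fin r × Fin s) → (Fin m × Fin n) → (Fin M × Fin N) :=
    fun p x => (enc p.1 x.1, enc p.2 x.2) with hE
  have hEinj : ∀ p q x y, E p x = E q y → p = q ∧ x = y := by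
    intro p q x y h
    rw [Prod.ext_iff] at h
    obtain ⟨h1a, h1b⟩ := enc_inj h.1
    obtain ⟨h2a, h2b⟩ := enc_inj h.2
    exact ⟨Prod.ext h1a h2a, Prod.ext h1b h2b⟩
  -- the splicing map on families of sets
  set Φ : ((Fin r × Fin s) → Finset (Fin m × Fin n)) → Finset (Fin M × Fin N) :=
    fun g => Finset.univ.biUnion fun p => (g p).image (E p) with hΦ
  have hmemΦ : ∀ g p x, E p x ∈ Φ g ↔ x ∈ g p := by
    intro g p x
    simp only [hΦ, Finset.mem_biUnion, Finset.mem_image, Finset.mem_univ, true_and]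
    constructor
    · rintro ⟨q, y, hy, hEq⟩
      obtain ⟨hpq, hxy⟩ := hEinj q p y x hEq
      subst hpq; subst hxy; exact hy
    · intro hx; exact ⟨p, x, hx, rfl⟩
  -- Φ maps families of independent sets to independent sets
  have hΦB : ∀ g : (Fin r × Fin s) → {t // t ∈ A}, Φ (fun p => (g p : Finset _)) ∈ B := by
    intro g
    simp only [hB, Finset.mem_filter, Finset.mem_univ, true_and]
    intro u hu v hv hadj
    simp only [hΦ, Finset.mem_biUnion, Finset.mem_image, Finset.mem_univ, true_and] at hu hv
    obtain ⟨p, x, hx, rfl⟩ := hu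
    obtain ⟨q, y, hy, rfl⟩ := hv
    have hgA := (g p).2
    simp only [hA, Finset.mem_filter, Finset.mem_univ, true_and] at hgA
    rw [boxProd_adj] at hadj
    rcases hadj with ⟨h1, h2⟩ | ⟨h1, h2⟩
    · obtain ⟨hpq1, hadj1⟩ := enc_adj h1
      obtain ⟨hpq2, hxy2⟩ := enc_inj h2
      have hpq : p = q := Prod.ext hpq1 hpq2
      subst hpq
      exact hgA x hx y hy (boxProd_adj.mpr (Or.inl ⟨hadj1, hxy2⟩))
    · obtain ⟨hpq2, hadj2⟩ := enc_adj h1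
      obtain ⟨hpq1, hxy1⟩ := enc_inj h2
      have hpq : p = q := Prod.ext hpq1 hpq2
      subst hpq
      exact hgA x hx y hy (boxProd_adj.mpr (Or.inr ⟨hadj2, hxy1⟩))
  -- the injection on the counting level
  have hinj : Function.Injective
      (fun g : (Fin r × Fin s) → {t // t ∈ A} =>
        (⟨Φ (fun p => (g p : Finset _)), hΦB g⟩ : {t // t ∈ B})) := by
    intro g g' h
    have h' : Φ (fun p => (g p : Finset _)) = Φ (fun p => (g' p : Finset _)) :=
      congrArg Subtype.val h
    funext p
    apply Subtype.ext
    apply Finset.ext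
    intro x
    rw [← hmemΦ (fun p => (g p : Finset _)) p x, h',
      hmemΦ (fun p => (g' p : Finset _)) p x]
  have hcard := Fintype.card_le_of_injective _ hinj
  simp only [Fintype.card_fun, Fintype.card_coe, Fintype.card_prod, Fintype.card_fin] at hcard
  have hAcard : gridN m n = A.card := by
    unfold gridN numIndep
    apply congrArg Finset.card
    ext t
    simp only [hA, Finset.mem_filter]
  have hBcard : gridN M N = B.card := by
    unfold gridN numIndep
    apply congrArg Finset.card
    ext t
    simp only [hB, Finset.mem_filter]
  rw [hAcard, hBcard]
  exact hcard
end

section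
/- For all positive integers m, a, b, one has N(m,a) · N(m,b) ≤ N(m, a+b+1): placing an independent set of the m×a grid and an independent set of the m×b grid on either side of an inserted column of unselected vertices yields an independent set of the m×(a+b+1) grid graph, injectively. -/
open SimpleGraph Filter Real Topology

/-- Left embedding of vertices. -/
def gridFL (m a b : ℕ) (p : Fin m × Fin a) : Fin m × Fin (a + b + 1) :=
  (p.1, ⟨p.2.val, by have := p.2.isLt; omega⟩)

/-- Right embedding of vertices. -/
def gridFR (m a b : ℕ) (p : Fin m × Fin b) : Fin m × Fin (a + b + 1) :=
  (p.1, ⟨a + 1 + p.2.val, by have := p.2.isLt; omega⟩)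

@[simp] lemma gridFL_fst (m a b : ℕ) (p : Fin m × Fin a) :
    (gridFL m a b p).1 = p.1 := rfl

@[simp] lemma gridFL_snd_val (m a b : ℕ) (p : Fin m × Fin a) :
    ((gridFL m a b p).2 : ℕ) = p.2.val := rfl

@[simp] lemma gridFR_fst (m a b : ℕ) (p : Fin m × Fin b) :
    (gridFR m a b p).1 = p.1 := rfl

@[simp] lemma gridFR_snd_val (m a b : ℕ) (p : Fin m × Fin b) :
    ((gridFR m a b p).2 : ℕ) = a + 1 + p.2.val := rfl

theorem grid_indep_count_supermultiplicative (m a b : ℕ) (hm : 0 < m)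
    (ha : 0 < a) (hb : 0 < b) :
    gridN m a * gridN m b ≤ gridN m (a + b + 1) := by
  classical
  unfold gridN numIndep
  rw [← Finset.card_product]
  set F : Finset (Fin m × Fin a) × Finset (Fin m × Fin b) →
      Finset (Fin m × Fin (a + b + 1)) :=
    fun p => p.1.image (gridFL m a b) ∪ p.2.image (gridFR m a b) with hF
  have hLmem : ∀ (s : Finset (Fin m × Fin a)) (t : Finset (Fin m × Fin b)) x,
      x ∈ s ↔ gridFL m a b x ∈ F (s, t) := by
    intro s t x
    constructor
    · intro hx
      exact Finset.mem_union_left _ (Finset.mem_image_of_mem _ hx)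
    · intro hx
      rcases Finset.mem_union.1 hx with hx | hx
      · obtain ⟨y, hy, hxy⟩ := Finset.mem_image.1 hx
        rw [Prod.ext_iff, Fin.ext_iff, Fin.ext_iff] at hxy
        simp only [gridFL_fst, gridFL_snd_val] at hxy
        have : y = x := Prod.ext (Fin.ext hxy.1) (Fin.ext hxy.2)
        rwa [← this]
      · obtain ⟨y, hy, hxy⟩ := Finset.mem_image.1 hx
        rw [Prod.ext_iff, Fin.ext_iff, Fin.ext_iff] at hxy
        simp only [gridFL_fst, gridFL_snd_val, gridFR_fst, gridFR_snd_val] at hxy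
        have := x.2.isLt
        omega
  have hRmem : ∀ (s : Finset (Fin m × Fin a)) (t : Finset (Fin m × Fin b)) x,
      x ∈ t ↔ gridFR m a b x ∈ F (s, t) := by
    intro s t x
    constructor
    · intro hx
      exact Finset.mem_union_right _ (Finset.mem_image_of_mem _ hx)
    · intro hx
      rcases Finset.mem_union.1 hx with hx | hx
      · obtain ⟨y, hy, hxy⟩ := Finset.mem_image.1 hx
        rw [Prod.ext_iff, Fin.ext_iff, Fin.ext_iff] at hxy
        simp only [gridFL_fst, gridFL_snd_val, gridFR_fst, gridFR_snd_val] at hxy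
        have := y.2.isLt
        omega
      · obtain ⟨y, hy, hxy⟩ := Finset.mem_image.1 hx
        rw [Prod.ext_iff, Fin.ext_iff, Fin.ext_iff] at hxy
        simp only [gridFR_fst, gridFR_snd_val] at hxy
        have : y = x := Prod.ext (Fin.ext hxy.1) (Fin.ext (by omega))
        rwa [← this]
  apply Finset.card_le_card_of_injOn F
  · -- maps into the filter
    intro p hp
    simp only [Finset.mem_coe, Finset.mem_product, Finset.mem_filter, Finset.mem_univ, true_and] at hp
    obtain ⟨hs, ht⟩ := hp
    simp only [Finset.mem_coe, Finset.mem_filter, Finset.mem_univ, true_and]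
    intro u hu v hv hadj
    rw [boxProd_adj, pathGraph_adj, pathGraph_adj] at hadj
    rcases Finset.mem_union.1 hu with hu | hu <;>
      rcases Finset.mem_union.1 hv with hv | hv <;>
      obtain ⟨x, hx, rfl⟩ := Finset.mem_image.1 hu <;>
      obtain ⟨y, hy, rfl⟩ := Finset.mem_image.1 hv <;>
      simp only [Fin.ext_iff, gridFL_fst, gridFL_snd_val, gridFR_fst,
        gridFR_snd_val] at hadj
    · refine hs x hx y hy ?_
      rw [boxProd_adj, pathGraph_adj, pathGraph_adj]
      rcases hadj with ⟨h1, h2⟩ | ⟨h1, h2⟩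
      · exact Or.inl ⟨h1, Fin.ext h2⟩
      · exact Or.inr ⟨h1, Fin.ext h2⟩
    · have := x.2.isLt; omega
    · have := y.2.isLt; omega
    · refine ht x hx y hy ?_
      rw [boxProd_adj, pathGraph_adj, pathGraph_adj]
      rcases hadj with ⟨h1, h2⟩ | ⟨h1, h2⟩
      · exact Or.inl ⟨by omega, Fin.ext (by omega)⟩
      · exact Or.inr ⟨by omega, Fin.ext h2⟩
  · -- injective on
    intro p _ q _ hpq
    have h1 : p.1 = q.1 := by
      ext x
      rw [hLmem p.1 p.2 x, hLmem q.1 q.2 x]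
      simp only [Prod.mk.eta] at *
      rw [hpq]
    have h2 : p.2 = q.2 := by
      ext x
      rw [hRmem p.1 p.2 x, hRmem q.1 q.2 x]
      simp only [Prod.mk.eta] at *
      rw [hpq]
    exact Prod.ext h1 h2
end

section
/- For every positive integer m there exists a real number L (denoted f(m,∞) and satisfying L > 0) such that the sequence n ↦ (ln N(m,n))/n converges to L as n → ∞. (Existence of the average free energy of the m×∞ grid strip.) -/
open SimpleGraph Filter Real Topology

open Classical in
lemma one_le_gridN (m n : ℕ) : 1 ≤ gridN m n := by
  rw [gridN, numIndep, Finset.one_le_card]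
  exact ⟨∅, by simp⟩

open Classical in
lemma gridN_submul (m a b : ℕ) : gridN m (a + b) ≤ gridN m a * gridN m b := by
  classical
  rw [gridN, gridN, gridN, numIndep, numIndep, numIndep]
  rw [← Finset.card_product]
  apply Finset.card_le_card_of_injOn
    (fun s => (Finset.univ.filter fun p : Fin m × Fin a => (p.1, Fin.castAdd b p.2) ∈ s,
               Finset.univ.filter fun p : Fin m × Fin b => (p.1, Fin.natAdd a p.2) ∈ s))
  · intro s hs
    simp only [Finset.mem_coe, Finset.mem_filter, Finset.mem_univ, true_and] at hs ⊢
    rw [Finset.mem_product]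
    constructor
    · simp only [Finset.mem_filter, Finset.mem_univ, true_and]
      rintro u hu v hv hadj
      refine hs _ hu _ hv ?_
      rw [boxProd_adj] at hadj ⊢
      dsimp only at hadj ⊢
      rcases hadj with ⟨h1, h2⟩ | ⟨h1, h2⟩
      · exact Or.inl ⟨h1, by rw [h2]⟩
      · refine Or.inr ⟨?_, h2⟩
        rw [pathGraph_adj] at h1 ⊢
        simpa using h1
    · simp only [Finset.mem_filter, Finset.mem_univ, true_and]
      rintro u hu v hv hadj
      refine hs _ hu _ hv ?_
      rw [boxProd_adj] at hadj ⊢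
      dsimp only at hadj ⊢
      rcases hadj with ⟨h1, h2⟩ | ⟨h1, h2⟩
      · exact Or.inl ⟨h1, by rw [h2]⟩
      · refine Or.inr ⟨?_, h2⟩
        rw [pathGraph_adj] at h1 ⊢
        simp only [Fin.coe_natAdd]
        omega
  · intro s _ t _ hst
    simp only [Prod.mk.injEq] at hst
    obtain ⟨h1, h2⟩ := hst
    ext ⟨i, j⟩
    refine Fin.addCases (fun j0 => ?_) (fun j0 => ?_) j
    · have := Finset.ext_iff.mp h1 (i, j0)
      simpa using this
    · have := Finset.ext_iff.mp h2 (i, j0)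
      simpa using this

open Classical in
lemma pow_le_gridN (m n : ℕ) (hm : 0 < m) : 2 ^ ((n + 1) / 2) ≤ gridN m n := by
  classical
  rw [gridN, numIndep]
  have hinj : Function.Injective (fun k : Fin ((n + 1) / 2) =>
      ((⟨0, hm⟩ : Fin m), (⟨2 * k.val, by omega⟩ : Fin n))) := by
    intro k k' h
    simp only [Prod.mk.injEq, Fin.mk.injEq] at h
    exact Fin.ext (by omega)
  calc (2 : ℕ) ^ ((n + 1) / 2)
      = (Finset.univ : Finset (Finset (Fin ((n + 1) / 2)))).card := by
        simp [Finset.card_univ]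
    _ ≤ _ := ?_
  apply Finset.card_le_card_of_injOn (fun S => S.image
      (fun k : Fin ((n + 1) / 2) => ((⟨0, hm⟩ : Fin m), (⟨2 * k.val, by omega⟩ : Fin n))))
  · intro S _
    simp only [Finset.mem_coe, Finset.mem_filter, Finset.mem_univ, true_and]
    intro u hu v hv hadj
    simp only [Finset.mem_image] at hu hv
    obtain ⟨k, _, rfl⟩ := hu
    obtain ⟨k', _, rfl⟩ := hv
    rw [boxProd_adj] at hadj
    dsimp only at hadj
    rcases hadj with ⟨h1, _⟩ | ⟨h2, _⟩
    · exact (pathGraph m).irrefl h1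
    · rw [pathGraph_adj] at h2
      simp only at h2
      omega
  · intro S _ T _ h
    exact Finset.image_injective hinj h

theorem strip_free_energy_exists (m : ℕ) (hm : 0 < m) :
    ∃ L : ℝ, 0 < L ∧
      Tendsto (fun n : ℕ => Real.log (gridN m n) / (n : ℝ)) atTop (𝓝 L) := by
  set u : ℕ → ℝ := fun n => Real.log (gridN m n) with hu
  have hpos : ∀ n, (1 : ℝ) ≤ (gridN m n : ℝ) := fun n => by
    exact_mod_cast one_le_gridN m n
  have hlog0 : ∀ n, 0 ≤ u n := fun n => Real.log_nonneg (hpos n)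
  have hsub : Subadditive u := by
    intro a b
    have h1 : (gridN m (a + b) : ℝ) ≤ (gridN m a : ℝ) * (gridN m b : ℝ) := by
      exact_mod_cast gridN_submul m a b
    calc u (a + b) ≤ Real.log ((gridN m a : ℝ) * (gridN m b : ℝ)) :=
          Real.log_le_log (by linarith [hpos (a + b)]) h1
      _ = u a + u b := Real.log_mul (by linarith [hpos a]) (by linarith [hpos b])
  have hbdd : BddBelow (Set.range fun n : ℕ => u n / n) := by
    refine ⟨0, ?_⟩
    rintro x ⟨n, rfl⟩
    exact div_nonneg (hlog0 n) (Nat.cast_nonneg n)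
  refine ⟨hsub.lim, ?_, hsub.tendsto_lim hbdd⟩
  have hkey : ∀ n : ℕ, 1 ≤ n → Real.log 2 / 2 ≤ u n / n := by
    intro n hn
    have h1 : ((2 : ℕ) ^ ((n + 1) / 2) : ℝ) ≤ (gridN m n : ℝ) := by
      exact_mod_cast pow_le_gridN m n hm
    have h2 : (((n + 1) / 2 : ℕ) : ℝ) * Real.log 2 ≤ u n := by
      have := Real.log_le_log (by positivity) h1
      rwa [Real.log_pow, Nat.cast_ofNat] at this
    have h3 : (n : ℝ) / 2 ≤ (((n + 1) / 2 : ℕ) : ℝ) := by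
      have : n ≤ 2 * ((n + 1) / 2) := by omega
      have := (Nat.cast_le (α := ℝ)).mpr this
      push_cast at this
      linarith
    have hn' : (0 : ℝ) < n := by exact_mod_cast hn
    rw [div_le_div_iff₀ (by norm_num) hn']
    have hl2 : 0 ≤ Real.log 2 := Real.log_nonneg (by norm_num)
    nlinarith
  have hne : ((fun n : ℕ => u n / n) '' Set.Ici 1).Nonempty :=
    Set.Nonempty.image _ Set.nonempty_Ici
  have : Real.log 2 / 2 ≤ hsub.lim := by
    rw [Subadditive.lim]
    apply le_csInf hne
    rintro x ⟨n, hn, rfl⟩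
    exact hkey n hn
  have h2pos : 0 < Real.log 2 / 2 := by positivity
  linarith
end

section
/- There exists a real number f such that: (i) for all positive integers m, n, one has ln N(m,n) / ((m+1)(n+1)) < f < ln N(m,n) / (m·n); and (ii) both functions (m,n) ↦ ln N(m,n)/((m+1)(n+1)) and (m,n) ↦ ln N(m,n)/(m·n) tend to f along the product filter atTop on ℕ × ℕ (i.e., as m and n both tend to infinity). -/
open SimpleGraph Filter Real Topology
open Finset


/-- adjacency on ℕ × ℕ coordinates -/
def adjVal (a b : ℕ × ℕ) : Prop :=
  ((a.1 + 1 = b.1 ∨ b.1 + 1 = a.1) ∧ a.2 = b.2) ∨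
  ((a.2 + 1 = b.2 ∨ b.2 + 1 = a.2) ∧ a.1 = b.1)

instance : DecidableRel adjVal := fun a b => by unfold adjVal; infer_instance

def Ind (s : Finset (ℕ × ℕ)) : Prop := ∀ u ∈ s, ∀ v ∈ s, ¬ adjVal u v

instance : DecidablePred Ind := fun s => by unfold Ind; infer_instance

def ISets (m n : ℕ) : Finset (Finset (ℕ × ℕ)) :=
  ((Finset.range m ×ˢ Finset.range n).powerset).filter Ind

def NN (m n : ℕ) : ℕ := (ISets m n).card

lemma mem_ISets {m n : ℕ} {s : Finset (ℕ × ℕ)} :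
    s ∈ ISets m n ↔ (∀ p ∈ s, p.1 < m ∧ p.2 < n) ∧ Ind s := by
  simp only [ISets, mem_filter, mem_powerset, and_congr_left_iff]
  intro _
  constructor
  · intro h p hp
    have := h hp
    simpa [Finset.mem_product] using this
  · intro h p hp
    simp only [Finset.mem_product, mem_range]
    exact h p hp

lemma vmap_adj {m n : ℕ} {u v : Fin m × Fin n} :
    (pathGraph m □ pathGraph n).Adj u v ↔
      adjVal (u.1.val, u.2.val) (v.1.val, v.2.val) := by
  simp only [boxProd_adj, pathGraph_adj, adjVal]
  constructor
  · rintro (⟨h1, h2⟩ | ⟨h1, h2⟩)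
    · exact Or.inl ⟨h1, by simp [h2]⟩
    · exact Or.inr ⟨h1, by simp [h2]⟩
  · rintro (⟨h1, h2⟩ | ⟨h1, h2⟩)
    · exact Or.inl ⟨h1, by exact Fin.ext h2⟩
    · exact Or.inr ⟨h1, by exact Fin.ext h2⟩

lemma gridN_eq_NN (m n : ℕ) : gridN m n = NN m n := by
  classical
  unfold gridN numIndep NN
  set vm : Fin m × Fin n → ℕ × ℕ := fun p => (p.1.val, p.2.val) with hvm
  have hinj : Function.Injective vm := by
    rintro ⟨a, b⟩ ⟨c, d⟩ h
    simp only [hvm, Prod.mk.injEq] at h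
    exact Prod.ext (Fin.ext h.1) (Fin.ext h.2)
  apply Finset.card_bij (fun s _ => s.image vm)
  · intro s hs
    simp only [mem_filter, mem_univ, true_and] at hs
    rw [mem_ISets]
    constructor
    · rintro p hp
      simp only [Finset.mem_image] at hp
      obtain ⟨q, hq, rfl⟩ := hp
      exact ⟨q.1.isLt, q.2.isLt⟩
    · intro u hu v hv
      simp only [Finset.mem_image] at hu hv
      obtain ⟨a, ha, rfl⟩ := hu
      obtain ⟨b, hb, rfl⟩ := hv
      have := hs a ha b hb
      rwa [vmap_adj] at this
  · intro s hs t ht h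
    exact Finset.image_injective hinj h
  · intro t ht
    rw [mem_ISets] at ht
    refine ⟨t.preimage vm hinj.injOn, ?_, ?_⟩
    · simp only [mem_filter, mem_univ, true_and]
      intro u hu v hv
      rw [Finset.mem_preimage] at hu hv
      rw [vmap_adj]
      exact ht.2 _ hu _ hv
    · rw [Finset.image_preimage]
      apply Finset.filter_true_of_mem
      intro p hp
      obtain ⟨h1, h2⟩ := ht.1 p hp
      exact ⟨(⟨p.1, h1⟩, ⟨p.2, h2⟩), rfl⟩

lemma one_le_NN (m n : ℕ) : 1 ≤ NN m n := by
  apply Finset.card_pos.2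
  exact ⟨∅, mem_ISets.2 ⟨by simp, by intro u hu; simp at hu⟩⟩

lemma NN_le_two_pow (m n : ℕ) : NN m n ≤ 2 ^ (m * n) := by
  calc NN m n ≤ (Finset.range m ×ˢ Finset.range n).powerset.card :=
        Finset.card_le_card (Finset.filter_subset _ _)
    _ = 2 ^ (m * n) := by
        rw [Finset.card_powerset, Finset.card_product, Finset.card_range,
          Finset.card_range]

lemma NN_mono_left {m m' : ℕ} (h : m ≤ m') (n : ℕ) : NN m n ≤ NN m' n := by
  apply Finset.card_le_card
  intro s hs
  rw [mem_ISets] at hs ⊢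
  exact ⟨fun p hp => ⟨lt_of_lt_of_le (hs.1 p hp).1 h, (hs.1 p hp).2⟩, hs.2⟩

lemma NN_comm (m n : ℕ) : NN m n = NN n m := by
  unfold NN
  apply Finset.card_bij (fun s _ => s.image Prod.swap)
  · intro s hs
    rw [mem_ISets] at hs ⊢
    constructor
    · intro p hp
      simp only [Finset.mem_image] at hp
      obtain ⟨q, hq, rfl⟩ := hp
      exact ⟨(hs.1 q hq).2, (hs.1 q hq).1⟩
    · intro u hu v hv
      simp only [Finset.mem_image] at hu hv
      obtain ⟨a, ha, rfl⟩ := hu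
      obtain ⟨b, hb, rfl⟩ := hv
      have := hs.2 a ha b hb
      unfold adjVal at this ⊢
      simp only [Prod.fst_swap, Prod.snd_swap]
      tauto
  · intro s _ t _ h
    exact Finset.image_injective Prod.swap_injective h
  · intro t ht
    rw [mem_ISets] at ht
    refine ⟨t.image Prod.swap, ?_, ?_⟩
    · rw [mem_ISets]
      constructor
      · intro p hp
        simp only [Finset.mem_image] at hp
        obtain ⟨q, hq, rfl⟩ := hp
        exact ⟨(ht.1 q hq).2, (ht.1 q hq).1⟩
      · intro u hu v hv
        simp only [Finset.mem_image] at hu hv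
        obtain ⟨a, ha, rfl⟩ := hu
        obtain ⟨b, hb, rfl⟩ := hv
        have := ht.2 a ha b hb
        unfold adjVal at this ⊢
        simp only [Prod.fst_swap, Prod.snd_swap]
        tauto
    · rw [Finset.image_image]
      simp [Function.comp_def]

section splitcombine
variable (a b n : ℕ)

/-- split map -/
def splitF (s : Finset (ℕ × ℕ)) : Finset (ℕ × ℕ) × Finset (ℕ × ℕ) :=
  (s.filter (fun p => p.1 < a),
   (s.filter (fun p => a ≤ p.1)).image (fun p => (p.1 - a, p.2)))

/-- combine map -/
def combF (q : Finset (ℕ × ℕ) × Finset (ℕ × ℕ)) : Finset (ℕ × ℕ) :=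
  q.1 ∪ q.2.image (fun p => (p.1 + a + 1, p.2))

lemma splitF_maps {s : Finset (ℕ × ℕ)} (hs : s ∈ ISets (a + b) n) :
    splitF a s ∈ ISets a n ×ˢ ISets b n := by
  rw [mem_ISets] at hs
  rw [Finset.mem_product, mem_ISets, mem_ISets]
  refine ⟨⟨?_, ?_⟩, ?_, ?_⟩
  · intro p hp
    simp only [splitF, Finset.mem_filter] at hp
    exact ⟨hp.2, (hs.1 p hp.1).2⟩
  · intro u hu v hv h
    simp only [splitF, Finset.mem_filter] at hu hv
    exact hs.2 u hu.1 v hv.1 h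
  · intro p hp
    simp only [splitF, Finset.mem_image, Finset.mem_filter] at hp
    obtain ⟨q, ⟨hq, hq2⟩, rfl⟩ := hp
    exact ⟨by have := (hs.1 q hq).1; omega, (hs.1 q hq).2⟩
  · intro u hu v hv h
    simp only [splitF, Finset.mem_image, Finset.mem_filter] at hu hv
    obtain ⟨x, ⟨hx, hx2⟩, rfl⟩ := hu
    obtain ⟨y, ⟨hy, hy2⟩, rfl⟩ := hv
    apply hs.2 x hx y hy
    unfold adjVal at h ⊢
    simp only at h ⊢
    omega

lemma splitF_recon {s : Finset (ℕ × ℕ)} (_hs : s ∈ ISets (a + b) n) :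
    (splitF a s).1 ∪ ((splitF a s).2.image (fun p => (p.1 + a, p.2))) = s := by
  ext p
  simp only [splitF, Finset.mem_union, Finset.mem_filter, Finset.mem_image]
  constructor
  · rintro (⟨hp, _⟩ | ⟨q, ⟨r, ⟨hr, hr2⟩, rfl⟩, rfl⟩)
    · exact hp
    · have : (r.1 - a + a, r.2) = r := by
        rw [Prod.ext_iff]; constructor <;> simp <;> omega
      rwa [this]
  · intro hp
    by_cases h : p.1 < a
    · exact Or.inl ⟨hp, h⟩
    · refine Or.inr ⟨(p.1 - a, p.2), ⟨p, ⟨hp, by omega⟩, rfl⟩, ?_⟩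
      rw [Prod.ext_iff]; constructor <;> simp <;> omega

lemma NN_split : NN (a + b) n ≤ NN a n * NN b n := by
  rw [NN, NN, NN, ← Finset.card_product]
  apply Finset.card_le_card_of_injOn (splitF a) (fun s hs => splitF_maps a b n hs)
  intro s hs t ht h
  rw [Finset.mem_coe] at hs ht
  rw [← splitF_recon a b n hs, ← splitF_recon a b n ht, h]

lemma combF_maps {q : Finset (ℕ × ℕ) × Finset (ℕ × ℕ)}
    (hq : q ∈ ISets a n ×ˢ ISets b n) : combF a q ∈ ISets (a + b + 1) n := by
  rw [Finset.mem_product, mem_ISets, mem_ISets] at hq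
  rw [mem_ISets]
  constructor
  · intro p hp
    simp only [combF, Finset.mem_union, Finset.mem_image] at hp
    rcases hp with hp | ⟨r, hr, rfl⟩
    · have := hq.1.1 p hp
      exact ⟨by omega, this.2⟩
    · have := hq.2.1 r hr
      exact ⟨by simp; omega, this.2⟩
  · intro u hu v hv h
    simp only [combF, Finset.mem_union, Finset.mem_image] at hu hv
    rcases hu with hu | ⟨x, hx, rfl⟩ <;> rcases hv with hv | ⟨y, hy, rfl⟩
    · exact hq.1.2 u hu v hv h
    · have h1 := (hq.1.1 u hu).1
      unfold adjVal at h; simp only at h; omega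
    · have h1 := (hq.1.1 v hv).1
      unfold adjVal at h; simp only at h; omega
    · apply hq.2.2 x hx y hy
      unfold adjVal at h ⊢; simp only at h ⊢; omega

lemma combF_recon {q : Finset (ℕ × ℕ) × Finset (ℕ × ℕ)}
    (hq : q ∈ ISets a n ×ˢ ISets b n) :
    splitF (a + 1) (combF a q) = q := by
  rw [Finset.mem_product, mem_ISets, mem_ISets] at hq
  rw [Prod.ext_iff]
  constructor
  · ext p
    simp only [splitF, combF, Finset.mem_filter, Finset.mem_union, Finset.mem_image]
    constructor
    · rintro ⟨hp | ⟨r, hr, rfl⟩, h2⟩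
      · exact hp
      · simp at h2
    · intro hp
      exact ⟨Or.inl hp, by have := (hq.1.1 p hp).1; omega⟩
  · ext p
    simp only [splitF, combF, Finset.mem_image, Finset.mem_filter, Finset.mem_union]
    constructor
    · rintro ⟨r, ⟨hr | ⟨x, hx, rfl⟩, h2⟩, rfl⟩
      · have := (hq.1.1 r hr).1; omega
      · have : (x.1 + a + 1 - (a + 1), x.2) = x := by
          rw [Prod.ext_iff]; constructor <;> simp
        rwa [this]
    · intro hp
      refine ⟨(p.1 + a + 1, p.2), ⟨Or.inr ⟨p, hp, rfl⟩, by omega⟩, ?_⟩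
      rw [Prod.ext_iff]; constructor <;> simp

lemma NN_comb : NN a n * NN b n ≤ NN (a + b + 1) n := by
  rw [NN, NN, NN, ← Finset.card_product]
  apply Finset.card_le_card_of_injOn (combF a) (fun q hq => combF_maps a b n hq)
  intro q hq r hr h
  rw [Finset.mem_coe] at hq hr
  rw [← combF_recon a b n hq, ← combF_recon a b n hr, h]

end splitcombine

lemma singleton_mem_ISets {m n x y : ℕ} (hx : x < m) (hy : y < n) :
    ({(x, y)} : Finset (ℕ × ℕ)) ∈ ISets m n := by
  rw [mem_ISets]
  refine ⟨by simp [hx, hy], ?_⟩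
  intro u hu v hv
  simp only [Finset.mem_singleton] at hu hv
  subst hu; subst hv
  unfold adjVal; simp

lemma NN_comb_strict (a b n : ℕ) (hn : 1 ≤ n) :
    NN a n * NN b n < NN (a + b + 1) n := by
  rw [NN, NN, NN, ← Finset.card_product]
  have hinj : Set.InjOn (combF a) ↑(ISets a n ×ˢ ISets b n) := by
    intro q hq r hr h
    rw [Finset.mem_coe] at hq hr
    rw [← combF_recon a b n hq, ← combF_recon a b n hr, h]
  rw [← Finset.card_image_of_injOn hinj]
  apply Finset.card_lt_card
  rw [Finset.ssubset_iff_of_subset]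
  · refine ⟨{(a, 0)}, singleton_mem_ISets (by omega) hn, ?_⟩
    intro hmem
    simp only [Finset.mem_image] at hmem
    obtain ⟨q, hq, h⟩ := hmem
    rw [Finset.mem_product, mem_ISets, mem_ISets] at hq
    have : (a, 0) ∈ combF a q := by rw [h]; simp
    simp only [combF, Finset.mem_union, Finset.mem_image] at this
    rcases this with h1 | ⟨r, _, h2⟩
    · have := (hq.1.1 _ h1).1; simp at this
    · rw [Prod.ext_iff] at h2; simp at h2; omega
  · intro s hs
    simp only [Finset.mem_image] at hs
    obtain ⟨q, hq, rfl⟩ := hs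
    exact combF_maps a b n hq

lemma NN_split_strict (a b n : ℕ) (ha : 1 ≤ a) (hb : 1 ≤ b) (hn : 1 ≤ n) :
    NN (a + b) n < NN a n * NN b n := by
  rw [NN, NN, NN, ← Finset.card_product]
  have hinj : Set.InjOn (splitF a) ↑(ISets (a + b) n) := by
    intro s hs t ht h
    rw [Finset.mem_coe] at hs ht
    rw [← splitF_recon a b n hs, ← splitF_recon a b n ht, h]
  rw [← Finset.card_image_of_injOn hinj]
  apply Finset.card_lt_card
  rw [Finset.ssubset_iff_of_subset]
  · refine ⟨({(a - 1, 0)}, {(0, 0)}), ?_, ?_⟩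
    · rw [Finset.mem_product]
      exact ⟨singleton_mem_ISets (by omega) hn, singleton_mem_ISets (by omega) hn⟩
    · intro hmem
      simp only [Finset.mem_image] at hmem
      obtain ⟨s, hs, h⟩ := hmem
      rw [mem_ISets] at hs
      rw [Prod.ext_iff] at h
      have h1 : (a - 1, 0) ∈ s := by
        have : (a - 1, 0) ∈ (splitF a s).1 := by rw [h.1]; simp
        simp only [splitF, Finset.mem_filter] at this
        exact this.1
      have h2 : (a, 0) ∈ s := by
        have : (0, 0) ∈ (splitF a s).2 := by rw [h.2]; simp
        simp only [splitF, Finset.mem_image, Finset.mem_filter] at this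
        obtain ⟨r, ⟨hr, hr2⟩, hr3⟩ := this
        rw [Prod.ext_iff] at hr3; simp at hr3
        have : r = (a, 0) := by rw [Prod.ext_iff]; constructor <;> simp <;> omega
        rwa [this] at hr
      apply hs.2 _ h1 _ h2
      unfold adjVal; simp; omega
  · intro q hq
    simp only [Finset.mem_image] at hq
    obtain ⟨s, hs, rfl⟩ := hq
    exact splitF_maps a b n hs

lemma NN_zero_le (n : ℕ) : NN 0 n ≤ 1 := by
  apply Finset.card_le_one.2
  intro s hs t ht
  rw [mem_ISets] at hs ht
  have hs0 : s = ∅ := Finset.eq_empty_of_forall_notMem fun p hp => by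
    have := (hs.1 p hp).1; omega
  have ht0 : t = ∅ := Finset.eq_empty_of_forall_notMem fun p hp => by
    have := (ht.1 p hp).1; omega
  rw [hs0, ht0]

lemma NN_pow_le (m n k : ℕ) : NN (k * m) n ≤ NN m n ^ k := by
  induction k with
  | zero => simpa using NN_zero_le n
  | succ k ih =>
    have h : (k + 1) * m = k * m + m := by ring
    rw [h, pow_succ]
    exact le_trans (NN_split _ _ _) (Nat.mul_le_mul ih le_rfl)

lemma le_succ_div_mul (a m : ℕ) (hm : 0 < m) : a ≤ (a / m + 1) * m := by
  have h1 := Nat.div_add_mod a m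
  have h2 := Nat.mod_lt a hm
  calc a = m * (a / m) + a % m := h1.symm
    _ ≤ m * (a / m) + m := by omega
    _ = (a / m + 1) * m := by ring

lemma NN_le_pow_div (a b m' n' : ℕ) (hm' : 0 < m') (hn' : 0 < n') :
    NN a b ≤ NN m' n' ^ ((b / n' + 1) * (a / m' + 1)) := by
  calc NN a b ≤ NN ((a / m' + 1) * m') b :=
        NN_mono_left (le_succ_div_mul a m' hm') b
    _ ≤ NN m' b ^ (a / m' + 1) := NN_pow_le m' b (a / m' + 1)
    _ ≤ (NN m' n' ^ (b / n' + 1)) ^ (a / m' + 1) := by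
        apply Nat.pow_le_pow_left
        calc NN m' b = NN b m' := NN_comm m' b
          _ ≤ NN ((b / n' + 1) * n') m' := NN_mono_left (le_succ_div_mul b n' hn') m'
          _ ≤ NN n' m' ^ (b / n' + 1) := NN_pow_le n' m' (b / n' + 1)
          _ = NN m' n' ^ (b / n' + 1) := by rw [NN_comm]
    _ = NN m' n' ^ ((b / n' + 1) * (a / m' + 1)) := by rw [← pow_mul]

lemma NN_comb_pow (m n k : ℕ) : NN m n ^ (k + 1) ≤ NN (k * (m + 1) + m) n := by
  induction k with
  | zero => simp
  | succ k ih =>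
    have h : (k + 1) * (m + 1) + m = (k * (m + 1) + m) + m + 1 := by ring
    rw [h, pow_succ]
    exact le_trans (Nat.mul_le_mul ih le_rfl) (NN_comb _ _ _)

lemma NN_comb_pow2 (m n k l : ℕ) :
    NN m n ^ ((k + 1) * (l + 1)) ≤ NN (k * (m + 1) + m) (l * (n + 1) + n) := by
  calc NN m n ^ ((k + 1) * (l + 1)) = (NN m n ^ (l + 1)) ^ (k + 1) := by
        rw [← pow_mul, mul_comm]
    _ ≤ (NN m (l * (n + 1) + n)) ^ (k + 1) := by
        apply Nat.pow_le_pow_left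
        rw [NN_comm m n, NN_comm m (l * (n + 1) + n)]
        exact NN_comb_pow n m l
    _ ≤ NN (k * (m + 1) + m) (l * (n + 1) + n) := NN_comb_pow _ _ k

section
variable (NN : ℕ → ℕ → ℕ)
variable (one_le : ∀ m n, 1 ≤ NN m n)
variable (hpowdiv : ∀ a b m' n' : ℕ, 0 < m' → 0 < n' →
    NN a b ≤ NN m' n' ^ ((b / n' + 1) * (a / m' + 1)))
variable (hcomb2 : ∀ m n k l : ℕ,
    NN m n ^ ((k + 1) * (l + 1)) ≤ NN (k * (m + 1) + m) (l * (n + 1) + n))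

include one_le hpowdiv hcomb2 in
lemma key_le (m n m' n' : ℕ) (hm' : 0 < m') (hn' : 0 < n') :
    Real.log (NN m n) / (((m : ℝ) + 1) * ((n : ℝ) + 1)) ≤
      Real.log (NN m' n') / ((m' : ℝ) * (n' : ℝ)) := by
  set L := Real.log (NN m n) with hLdef
  set L' := Real.log (NN m' n') with hL'def
  have hL'nn : 0 ≤ L' := Real.log_nonneg (by exact_mod_cast one_le m' n')
  have hm'R : (0 : ℝ) < m' := by exact_mod_cast hm'
  have hn'R : (0 : ℝ) < n' := by exact_mod_cast hn'
  -- pointwise bound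
  set A : ℕ → ℕ := fun k => k * (m + 1) + m with hA
  set B : ℕ → ℕ := fun k => k * (n + 1) + n with hB
  set g : ℕ → ℝ := fun k =>
    (((A k : ℝ) / ((k : ℝ) + 1)) / m' + 1 / ((k : ℝ) + 1)) *
    (((B k : ℝ) / ((k : ℝ) + 1)) / n' + 1 / ((k : ℝ) + 1)) * L' with hg
  have hk1 : ∀ k : ℕ, (0 : ℝ) < (k : ℝ) + 1 := fun k => by positivity
  have key : ∀ k : ℕ, L ≤ g k := by
    intro k
    have c1 : NN m n ^ ((k + 1) * (k + 1)) ≤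
        NN m' n' ^ ((B k / n' + 1) * (A k / m' + 1)) :=
      le_trans (hcomb2 m n k k) (hpowdiv (A k) (B k) m' n' hm' hn')
    have c2 : ((k : ℝ) + 1) * ((k : ℝ) + 1) * L ≤
        (((B k / n' + 1) * (A k / m' + 1) : ℕ) : ℝ) * L' := by
      have hpos : (0 : ℝ) < (NN m n : ℝ) ^ ((k + 1) * (k + 1)) := by
        have : (1 : ℝ) ≤ (NN m n : ℝ) := by exact_mod_cast one_le m n
        positivity
      have hcast : ((NN m n : ℝ)) ^ ((k + 1) * (k + 1)) ≤
          ((NN m' n' : ℝ)) ^ ((B k / n' + 1) * (A k / m' + 1)) := by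
        exact_mod_cast c1
      have hlog := Real.log_le_log hpos hcast
      rw [Real.log_pow, Real.log_pow] at hlog
      calc ((k : ℝ) + 1) * ((k : ℝ) + 1) * L
          = (((k + 1) * (k + 1) : ℕ) : ℝ) * L := by push_cast; ring
        _ ≤ _ := hlog
    have c3 : (((B k / n' + 1) * (A k / m' + 1) : ℕ) : ℝ) * L' ≤
        (((B k : ℝ) / n' + 1) * ((A k : ℝ) / m' + 1)) * L' := by
      apply mul_le_mul_of_nonneg_right _ hL'nn
      push_cast
      apply mul_le_mul _ _ (by positivity) (by positivity)
      · exact add_le_add_left Nat.cast_div_le 1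
      · exact add_le_add_left Nat.cast_div_le 1
    have c4 : L ≤ ((((B k : ℝ) / n' + 1) * ((A k : ℝ) / m' + 1)) * L') /
        (((k : ℝ) + 1) * ((k : ℝ) + 1)) := by
      rw [le_div_iff₀ (by positivity)]
      calc L * (((k : ℝ) + 1) * ((k : ℝ) + 1))
          = ((k : ℝ) + 1) * ((k : ℝ) + 1) * L := by ring
        _ ≤ _ := le_trans c2 c3
    refine c4.trans_eq ?_
    rw [hg]
    have h1 : ((k : ℝ) + 1) ≠ 0 := ne_of_gt (hk1 k)
    field_simp
  -- limit of g
  have hAt : Tendsto (fun k : ℕ => (A k : ℝ) / ((k : ℝ) + 1)) atTop (𝓝 ((m : ℝ) + 1)) := by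
    have heq : ∀ k : ℕ, (A k : ℝ) / ((k : ℝ) + 1) = ((m : ℝ) + 1) - 1 / ((k : ℝ) + 1) := by
      intro k
      have h1 : ((k : ℝ) + 1) ≠ 0 := ne_of_gt (hk1 k)
      rw [hA]
      push_cast
      field_simp
      ring
    rw [funext heq]
    simpa using (tendsto_const_nhds (x := (m : ℝ) + 1)).sub tendsto_one_div_add_atTop_nhds_zero_nat
  have hBt : Tendsto (fun k : ℕ => (B k : ℝ) / ((k : ℝ) + 1)) atTop (𝓝 ((n : ℝ) + 1)) := by
    have heq : ∀ k : ℕ, (B k : ℝ) / ((k : ℝ) + 1) = ((n : ℝ) + 1) - 1 / ((k : ℝ) + 1) := by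
      intro k
      have h1 : ((k : ℝ) + 1) ≠ 0 := ne_of_gt (hk1 k)
      rw [hB]
      push_cast
      field_simp
      ring
    rw [funext heq]
    simpa using (tendsto_const_nhds (x := (n : ℝ) + 1)).sub tendsto_one_div_add_atTop_nhds_zero_nat
  have hgt : Tendsto g atTop
      (𝓝 ((((m : ℝ) + 1) / m' + 0) * (((n : ℝ) + 1) / n' + 0) * L')) := by
    exact (((hAt.div_const _).add tendsto_one_div_add_atTop_nhds_zero_nat).mul
      ((hBt.div_const _).add tendsto_one_div_add_atTop_nhds_zero_nat)).mul_const _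
  have hlim : L ≤ ((m : ℝ) + 1) / m' * (((n : ℝ) + 1) / n') * L' := by
    have := ge_of_tendsto' hgt key
    simpa using this
  rw [div_le_div_iff₀ (by positivity) (by positivity)]
  calc L * ((m' : ℝ) * n') ≤ (((m : ℝ) + 1) / m' * (((n : ℝ) + 1) / n') * L') * ((m' : ℝ) * n') :=
        mul_le_mul_of_nonneg_right hlim (by positivity)
    _ = L' * (((m : ℝ) + 1) * ((n : ℝ) + 1)) := by field_simp

end

section main
variable (NN : ℕ → ℕ → ℕ)
variable (one_le : ∀ m n, 1 ≤ NN m n)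
variable (le2pow : ∀ m n, NN m n ≤ 2 ^ (m * n))
variable (hpowdiv : ∀ a b m' n' : ℕ, 0 < m' → 0 < n' →
    NN a b ≤ NN m' n' ^ ((b / n' + 1) * (a / m' + 1)))
variable (hcomb2 : ∀ m n k l : ℕ,
    NN m n ^ ((k + 1) * (l + 1)) ≤ NN (k * (m + 1) + m) (l * (n + 1) + n))
variable (hcomm : ∀ m n, NN m n = NN n m)
variable (hsplit : ∀ a b n, NN (a + b) n ≤ NN a n * NN b n)
variable (hcomb : ∀ a b n, NN a n * NN b n ≤ NN (a + b + 1) n)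
variable (hcombstrict : ∀ a b n, 1 ≤ n → NN a n * NN b n < NN (a + b + 1) n)
variable (hsplitstrict : ∀ a b n, 1 ≤ a → 1 ≤ b → 1 ≤ n →
    NN (a + b) n < NN a n * NN b n)

include one_le le2pow hpowdiv hcomb2 hcomm hsplit hcomb hcombstrict hsplitstrict in
theorem main_abstract :
    ∃ f : ℝ,
      (∀ m n : ℕ, 0 < m → 0 < n →
        Real.log (NN m n) / (((m : ℝ) + 1) * ((n : ℝ) + 1)) < f ∧
        f < Real.log (NN m n) / ((m : ℝ) * (n : ℝ))) ∧
      Tendsto (fun p : ℕ × ℕ =>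
          Real.log (NN p.1 p.2) / (((p.1 : ℝ) + 1) * ((p.2 : ℝ) + 1)))
        atTop (𝓝 f) ∧
      Tendsto (fun p : ℕ × ℕ =>
          Real.log (NN p.1 p.2) / ((p.1 : ℝ) * (p.2 : ℝ)))
        atTop (𝓝 f) := by
  classical
  have hkey := key_le NN one_le hpowdiv hcomb2
  set S : Set ℝ := {x | ∃ m n : ℕ, 0 < m ∧ 0 < n ∧
    x = Real.log (NN m n) / (((m : ℝ) + 1) * ((n : ℝ) + 1))} with hS
  have hne : S.Nonempty := ⟨_, 1, 1, one_pos, one_pos, rfl⟩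
  have hbdd : BddAbove S := by
    refine ⟨Real.log (NN 1 1) / ((1 : ℝ) * (1 : ℝ)), ?_⟩
    rintro x ⟨m, n, hm, hn, rfl⟩
    exact_mod_cast hkey m n 1 1 one_pos one_pos
  set f : ℝ := sSup S with hf
  have hlef : ∀ m n : ℕ, 0 < m → 0 < n →
      Real.log (NN m n) / (((m : ℝ) + 1) * ((n : ℝ) + 1)) ≤ f :=
    fun m n hm hn => le_csSup hbdd ⟨m, n, hm, hn, rfl⟩
  have hfle : ∀ m n : ℕ, 0 < m → 0 < n →
      f ≤ Real.log (NN m n) / ((m : ℝ) * (n : ℝ)) := by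
    intro m n hm hn
    apply csSup_le hne
    rintro x ⟨a, b, ha, hb, rfl⟩
    exact hkey a b m n hm hn
  -- strict lower bound
  have hstrictlow : ∀ m n : ℕ, 0 < m → 0 < n →
      Real.log (NN m n) / (((m : ℝ) + 1) * ((n : ℝ) + 1)) < f := by
    intro m n hm hn
    have h1 : NN m n * NN m n ≤ NN m (n + n + 1) := by
      rw [hcomm m n, hcomm m (n + n + 1)]
      exact hcomb n n m
    have h2 : NN m (n + n + 1) * NN m (n + n + 1) < NN (m + m + 1) (n + n + 1) :=
      hcombstrict m m (n + n + 1) (by omega)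
    have h4 : NN m n ^ 4 < NN (m + m + 1) (n + n + 1) := by
      calc NN m n ^ 4 = (NN m n * NN m n) * (NN m n * NN m n) := by ring
        _ ≤ NN m (n + n + 1) * NN m (n + n + 1) := Nat.mul_le_mul h1 h1
        _ < _ := h2
    have hlog : 4 * Real.log (NN m n) < Real.log (NN (m + m + 1) (n + n + 1)) := by
      have hpos : (0 : ℝ) < (NN m n : ℝ) ^ 4 := by
        have : (1 : ℝ) ≤ (NN m n : ℝ) := by exact_mod_cast one_le m n
        positivity
      have hcast : ((NN m n : ℝ)) ^ 4 < (NN (m + m + 1) (n + n + 1) : ℝ) := by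
        exact_mod_cast h4
      have := Real.log_lt_log hpos hcast
      rwa [Real.log_pow, Nat.cast_ofNat] at this
    have hDpos : (0 : ℝ) < ((m : ℝ) + 1) * ((n : ℝ) + 1) := by positivity
    have hstep : Real.log (NN m n) / (((m : ℝ) + 1) * ((n : ℝ) + 1)) <
        Real.log (NN (m + m + 1) (n + n + 1)) /
          ((((m + m + 1 : ℕ) : ℝ) + 1) * (((n + n + 1 : ℕ) : ℝ) + 1)) := by
      rw [div_lt_div_iff₀ hDpos (by positivity)]
      push_cast
      calc Real.log (NN m n) * (((m : ℝ) + m + 1 + 1) * ((n : ℝ) + n + 1 + 1))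
          = (4 * Real.log (NN m n)) * (((m : ℝ) + 1) * ((n : ℝ) + 1)) := by ring
        _ < Real.log (NN (m + m + 1) (n + n + 1)) * (((m : ℝ) + 1) * ((n : ℝ) + 1)) :=
            mul_lt_mul_of_pos_right hlog hDpos
    exact lt_of_lt_of_le hstep (hlef (m + m + 1) (n + n + 1) (by omega) (by omega))
  -- strict upper bound
  have hstrictup : ∀ m n : ℕ, 0 < m → 0 < n →
      f < Real.log (NN m n) / ((m : ℝ) * (n : ℝ)) := by
    intro m n hm hn
    have h1 : NN (m + m) (n + n) ≤ NN (m + m) n * NN (m + m) n := by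
      rw [hcomm (m + m) (n + n), hcomm (m + m) n]
      exact hsplit n n (m + m)
    have h2 : NN (m + m) n < NN m n * NN m n := hsplitstrict m m n hm hm hn
    have h4 : NN (m + m) (n + n) < NN m n ^ 4 := by
      calc NN (m + m) (n + n) ≤ NN (m + m) n * NN (m + m) n := h1
        _ < (NN m n * NN m n) * (NN m n * NN m n) :=
            Nat.mul_lt_mul_of_lt_of_lt h2 h2
        _ = NN m n ^ 4 := by ring
    have hlog : Real.log (NN (m + m) (n + n)) < 4 * Real.log (NN m n) := by
      have hpos : (0 : ℝ) < (NN (m + m) (n + n) : ℝ) := by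
        have : (1 : ℝ) ≤ (NN (m + m) (n + n) : ℝ) := by exact_mod_cast one_le _ _
        linarith
      have hcast : (NN (m + m) (n + n) : ℝ) < ((NN m n : ℝ)) ^ 4 := by
        exact_mod_cast h4
      have := Real.log_lt_log hpos hcast
      rwa [Real.log_pow, Nat.cast_ofNat] at this
    have hDpos : (0 : ℝ) < (m : ℝ) * (n : ℝ) := by
      have hm' : (0 : ℝ) < (m : ℝ) := by exact_mod_cast hm
      have hn' : (0 : ℝ) < (n : ℝ) := by exact_mod_cast hn
      positivity
    have hstep : Real.log (NN (m + m) (n + n)) /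
        (((m + m : ℕ) : ℝ) * ((n + n : ℕ) : ℝ)) <
        Real.log (NN m n) / ((m : ℝ) * (n : ℝ)) := by
      rw [div_lt_div_iff₀ (by push_cast; positivity) hDpos]
      push_cast
      calc Real.log (NN (m + m) (n + n)) * ((m : ℝ) * (n : ℝ))
          < (4 * Real.log (NN m n)) * ((m : ℝ) * (n : ℝ)) :=
            mul_lt_mul_of_pos_right hlog hDpos
        _ = Real.log (NN m n) * (((m : ℝ) + m) * ((n : ℝ) + n)) := by ring
    exact lt_of_le_of_lt (hfle (m + m) (n + n) (by omega) (by omega)) hstep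
  -- error term
  set e : ℕ × ℕ → ℝ := fun p =>
    Real.log 2 * (((p.1 : ℝ) + (p.2 : ℝ) + 1) / ((p.1 : ℝ) * (p.2 : ℝ))) with he
  have h1fst : Tendsto (fun p : ℕ × ℕ => 1 / ((p.1 : ℝ))) atTop (𝓝 0) := by
    have hf1 : Tendsto (Prod.fst : ℕ × ℕ → ℕ) atTop atTop := by
      rw [← Filter.prod_atTop_atTop_eq]; exact tendsto_fst
    exact tendsto_one_div_atTop_nhds_zero_nat.comp hf1
  have h1snd : Tendsto (fun p : ℕ × ℕ => 1 / ((p.2 : ℝ))) atTop (𝓝 0) := by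
    have hf2 : Tendsto (Prod.snd : ℕ × ℕ → ℕ) atTop atTop := by
      rw [← Filter.prod_atTop_atTop_eq]; exact tendsto_snd
    exact tendsto_one_div_atTop_nhds_zero_nat.comp hf2
  have hev1 : ∀ᶠ p : ℕ × ℕ in atTop, 1 ≤ p.1 ∧ 1 ≤ p.2 :=
    eventually_atTop.2 ⟨(1, 1), fun b hb => ⟨hb.1, hb.2⟩⟩
  have he0 : Tendsto e atTop (𝓝 0) := by
    have heq : ∀ᶠ p : ℕ × ℕ in atTop,
        Real.log 2 * (1 / (p.2 : ℝ) + 1 / (p.1 : ℝ) + (1 / (p.1 : ℝ)) * (1 / (p.2 : ℝ)))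
          = e p := by
      filter_upwards [hev1] with p hp
      have h1 : ((p.1 : ℝ)) ≠ 0 := by
        have : (0 : ℝ) < (p.1 : ℝ) := by exact_mod_cast hp.1
        linarith
      have h2 : ((p.2 : ℝ)) ≠ 0 := by
        have : (0 : ℝ) < (p.2 : ℝ) := by exact_mod_cast hp.2
        linarith
      rw [he]
      field_simp
    apply Tendsto.congr' heq ?_
    have ht : Tendsto (fun p : ℕ × ℕ =>
        Real.log 2 * (1 / (p.2 : ℝ) + 1 / (p.1 : ℝ) + (1 / (p.1 : ℝ)) * (1 / (p.2 : ℝ))))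
        atTop (𝓝 (Real.log 2 * (0 + 0 + 0 * 0))) :=
      tendsto_const_nhds.mul ((h1snd.add h1fst).add (h1fst.mul h1snd))
    simpa using ht
  -- gap bound
  have hgap : ∀ m n : ℕ, 0 < m → 0 < n →
      Real.log (NN m n) / ((m : ℝ) * (n : ℝ)) ≤
        Real.log (NN m n) / (((m : ℝ) + 1) * ((n : ℝ) + 1)) + e (m, n) := by
    intro m n hm hn
    have hmR : (0 : ℝ) < (m : ℝ) := by exact_mod_cast hm
    have hnR : (0 : ℝ) < (n : ℝ) := by exact_mod_cast hn
    set L := Real.log (NN m n) with hL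
    have hmn0 : (0 : ℝ) < (m : ℝ) * (n : ℝ) := by positivity
    have hMN0 : (0 : ℝ) < ((m : ℝ) + 1) * ((n : ℝ) + 1) := by positivity
    have hLle : L ≤ (m : ℝ) * (n : ℝ) * Real.log 2 := by
      have hcast : (NN m n : ℝ) ≤ (2 : ℝ) ^ (m * n) := by exact_mod_cast le2pow m n
      have hpos : (0 : ℝ) < (NN m n : ℝ) := by
        have : (1 : ℝ) ≤ (NN m n : ℝ) := by exact_mod_cast one_le m n
        linarith
      have := Real.log_le_log hpos hcast
      rw [Real.log_pow] at this
      calc L ≤ ((m * n : ℕ) : ℝ) * Real.log 2 := this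
        _ = (m : ℝ) * (n : ℝ) * Real.log 2 := by push_cast; ring
    have h1 : L / ((m : ℝ) * (n : ℝ)) - L / (((m : ℝ) + 1) * ((n : ℝ) + 1)) =
        L * (((m : ℝ) + (n : ℝ) + 1) /
          (((m : ℝ) * (n : ℝ)) * (((m : ℝ) + 1) * ((n : ℝ) + 1)))) := by
      field_simp
      ring
    have h2 : L * (((m : ℝ) + (n : ℝ) + 1) /
          (((m : ℝ) * (n : ℝ)) * (((m : ℝ) + 1) * ((n : ℝ) + 1)))) ≤
        ((m : ℝ) * (n : ℝ) * Real.log 2) * (((m : ℝ) + (n : ℝ) + 1) /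
          (((m : ℝ) * (n : ℝ)) * (((m : ℝ) + 1) * ((n : ℝ) + 1)))) :=
      mul_le_mul_of_nonneg_right hLle (by positivity)
    have h3 : ((m : ℝ) * (n : ℝ) * Real.log 2) * (((m : ℝ) + (n : ℝ) + 1) /
          (((m : ℝ) * (n : ℝ)) * (((m : ℝ) + 1) * ((n : ℝ) + 1)))) =
        Real.log 2 * (((m : ℝ) + (n : ℝ) + 1) / (((m : ℝ) + 1) * ((n : ℝ) + 1))) := by
      field_simp
    have h4 : Real.log 2 * (((m : ℝ) + (n : ℝ) + 1) / (((m : ℝ) + 1) * ((n : ℝ) + 1))) ≤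
        Real.log 2 * (((m : ℝ) + (n : ℝ) + 1) / ((m : ℝ) * (n : ℝ))) := by
      apply mul_le_mul_of_nonneg_left _ (Real.log_nonneg one_le_two)
      apply div_le_div_of_nonneg_left (by positivity) hmn0
      nlinarith
    have he' : e (m, n) = Real.log 2 * (((m : ℝ) + (n : ℝ) + 1) / ((m : ℝ) * (n : ℝ))) := by
      rw [he]
    linarith
  refine ⟨f, fun m n hm hn => ⟨hstrictlow m n hm hn, hstrictup m n hm hn⟩, ?_, ?_⟩
  · -- f⁻ tendsto
    apply tendsto_of_tendsto_of_tendsto_of_le_of_le'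
      (g := fun p : ℕ × ℕ => f - e p) (h := fun _ => f)
    · simpa using tendsto_const_nhds.sub he0
    · exact tendsto_const_nhds
    · filter_upwards [hev1] with p hp
      have hle1 := hfle p.1 p.2 hp.1 hp.2
      have hle2 := hgap p.1 p.2 hp.1 hp.2
      have : e (p.1, p.2) = e p := by rfl
      rw [this] at hle2
      linarith
    · filter_upwards [hev1] with p hp
      exact hlef p.1 p.2 hp.1 hp.2
  · -- f tendsto
    apply tendsto_of_tendsto_of_tendsto_of_le_of_le'
      (g := fun _ => f) (h := fun p : ℕ × ℕ => f + e p)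
    · exact tendsto_const_nhds
    · simpa using tendsto_const_nhds.add he0
    · filter_upwards [hev1] with p hp
      exact hfle p.1 p.2 hp.1 hp.2
    · filter_upwards [hev1] with p hp
      have hle1 := hlef p.1 p.2 hp.1 hp.2
      have hle2 := hgap p.1 p.2 hp.1 hp.2
      have : e (p.1, p.2) = e p := by rfl
      rw [this] at hle2
      linarith

end main


theorem grid_free_energy_exists :
    ∃ f : ℝ,
      (∀ m n : ℕ, 0 < m → 0 < n →
        Real.log (gridN m n) / (((m : ℝ) + 1) * ((n : ℝ) + 1)) < f ∧
        f < Real.log (gridN m n) / ((m : ℝ) * (n : ℝ))) ∧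
      Tendsto (fun p : ℕ × ℕ =>
          Real.log (gridN p.1 p.2) / (((p.1 : ℝ) + 1) * ((p.2 : ℝ) + 1)))
        atTop (𝓝 f) ∧
      Tendsto (fun p : ℕ × ℕ =>
          Real.log (gridN p.1 p.2) / ((p.1 : ℝ) * (p.2 : ℝ)))
        atTop (𝓝 f) := by
  obtain ⟨f, h1, h2, h3⟩ := main_abstract NN one_le_NN NN_le_two_pow
    NN_le_pow_div NN_comb_pow2 NN_comm NN_split NN_comb NN_comb_strict NN_split_strict
  refine ⟨f, ?_, ?_, ?_⟩ <;> simp only [gridN_eq_NN]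
  · exact h1
  · exact h2
  · exact h3
end

section
/- For all integers m ≥ 2 and n ≥ 1, one has N(m,n) ≤ C(m+1,n) ≤ N(m+1,n): every independent set of the m×n grid graph, extended by an empty column, yields an independent set of the (m+1)×n cylindrical grid graph (injectively), and every independent set of the (m+1)×n cylindrical grid graph is an independent set of the (m+1)×n grid graph (since the latter is a subgraph of the former with the same vertex set). -/
open SimpleGraph Filter Real Topology

/-- `C(m,n)`: number of independent sets of the `m × n` cylindrical grid graph,
the box product of the cycle graph on `m` vertices with the path graph on `n`
vertices. -/
noncomputable def cylC (m n : ℕ) : ℕ :=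
  numIndep (cycleGraph m □ pathGraph n)

lemma cycle_adj_castSucc {m : ℕ} (hm : 2 ≤ m) {i j : Fin m}
    (h : (SimpleGraph.cycleGraph (m + 1)).Adj i.castSucc j.castSucc) :
    (SimpleGraph.pathGraph m).Adj i j := by
  rw [SimpleGraph.cycleGraph_adj'] at h
  rw [SimpleGraph.pathGraph_adj]
  have hi' : i.val < m := i.isLt
  have hj' : j.val < m := j.isLt
  have key : ∀ a b : ℕ, a < m → b < m → (m + 1 - b + a) % (m + 1) = 1 → a = b + 1 := by
    intro a b ha hb h
    rcases lt_or_ge (m + 1 - b + a) (m + 1) with hlt | hge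
    · rw [Nat.mod_eq_of_lt hlt] at h; omega
    · rw [Nat.mod_eq_sub_mod hge, Nat.mod_eq_of_lt (by omega)] at h; omega
  have hsub : ∀ u v : Fin (m+1), (u - v).val = (m + 1 - v.val + u.val) % (m + 1) :=
    fun u v => rfl
  rw [hsub, hsub] at h
  rcases h with h | h
  · exact Or.inr (key i.val j.val hi' hj' h).symm
  · exact Or.inl (key j.val i.val hj' hi' h).symm

theorem grid_le_cyl_le_grid (m n : ℕ) (hm : 2 ≤ m) (hn : 1 ≤ n) :
    gridN m n ≤ cylC (m + 1) n ∧ cylC (m + 1) n ≤ gridN (m + 1) n := by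
  classical
  constructor
  · -- inject via castSucc on first coordinate
    unfold gridN cylC numIndep
    set e : Fin m × Fin n ↪ Fin (m+1) × Fin n :=
      (Fin.castSuccEmb.prodMap (Function.Embedding.refl _))
    apply Finset.card_le_card_of_injOn (fun s => s.map e)
    · intro s hs
      simp only [Finset.mem_coe, Finset.mem_filter, Finset.mem_univ, true_and] at hs ⊢
      intro u hu v hv hadj
      simp only [Finset.mem_map] at hu hv
      obtain ⟨a, ha, rfl⟩ := hu
      obtain ⟨b, hb, rfl⟩ := hv
      apply hs a ha b hb
      rw [SimpleGraph.boxProd_adj] at hadj ⊢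
      rcases hadj with ⟨h1, h2⟩ | ⟨h1, h2⟩
      · exact Or.inl ⟨cycle_adj_castSucc hm h1, by
          simpa [e] using h2⟩
      · refine Or.inr ⟨by simpa [e] using h1, ?_⟩
        have : (e a).1 = (e b).1 := h2
        simpa [e, Fin.castSucc_inj] using this
    · intro s _ t _ h
      exact Finset.map_injective e h
  · unfold gridN cylC numIndep
    apply Finset.card_le_card
    intro s hs
    simp only [Finset.mem_filter, Finset.mem_univ, true_and] at hs ⊢
    intro u hu v hv hadj
    apply hs u hu v hv
    rw [SimpleGraph.boxProd_adj] at hadj ⊢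
    rcases hadj with ⟨h1, h2⟩ | h
    · exact Or.inl ⟨SimpleGraph.pathGraph_le_cycleGraph h1, h2⟩
    · exact Or.inr h
end

section
/- For all integers m ≥ 2 and n ≥ 1, one has N(m,n) ≤ Γ(m+1,n) ≤ N(m+1,n): every independent set of the m×n grid graph, extended by an empty column, yields an independent set of the (m+1)×n twisted cylindrical grid graph (injectively), and every independent set of the (m+1)×n twisted cylindrical grid graph is an independent set of the (m+1)×n grid graph (embedded via the row-by-row linear ordering of the vertices). -/
open SimpleGraph Filter Real Topology

/-- The `m × n` twisted cylindrical grid graph: vertices `0, …, m*n - 1`, with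
`i` and `j` adjacent iff `|i - j| = 1` or `|i - j| = m`. -/
noncomputable def twistGrid (m n : ℕ) : SimpleGraph (Fin (m * n)) :=
  SimpleGraph.fromRel (fun i j => i.val + 1 = j.val ∨ i.val + m = j.val)

/-- `Γ(m,n)`: number of independent sets of the `m × n` twisted cylindrical grid graph. -/
noncomputable def twistGamma (m n : ℕ) : ℕ := numIndep (twistGrid m n)

lemma numIndep_le_of_emb {V W : Type*} [Fintype V] [Fintype W] (G : SimpleGraph V)
    (H : SimpleGraph W) (f : V ↪ W) (hf : ∀ u v, H.Adj (f u) (f v) → G.Adj u v) :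
    numIndep G ≤ numIndep H := by
  classical
  unfold numIndep
  apply Finset.card_le_card_of_injOn (fun s => s.map f)
  · intro s hs
    simp only [Finset.mem_coe, Finset.mem_filter, Finset.mem_univ, true_and, Finset.mem_map] at hs ⊢
    rintro u ⟨a, ha, rfl⟩ v ⟨b, hb, rfl⟩ hadj
    exact hs a ha b hb (hf a b hadj)
  · intro s _ t _ h
    exact Finset.map_injective f h

lemma key_uniq {M j i j' i' : ℕ} (hi : i < M) (hi' : i' < M)
    (h : j * M + i = j' * M + i') : j = j' ∧ i = i' := by
  have hM : 0 < M := by omega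
  have h1 : i = i' := by
    have := congrArg (· % M) h
    simpa [Nat.add_comm, Nat.add_mul_mod_self_right, Nat.mod_eq_of_lt hi,
      Nat.mod_eq_of_lt hi'] using this
  subst h1
  exact ⟨Nat.eq_of_mul_eq_mul_right hM (by omega), rfl⟩

def embA (m n : ℕ) : Fin m × Fin n ↪ Fin ((m + 1) * n) where
  toFun p := ⟨p.2.val * (m + 1) + p.1.val, by
    calc p.2.val * (m + 1) + p.1.val < (p.2.val + 1) * (m + 1) := by
          rw [Nat.add_mul, Nat.one_mul]
          have := p.1.isLt; omega
      _ ≤ n * (m + 1) := Nat.mul_le_mul_right _ p.2.isLt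
      _ = (m + 1) * n := Nat.mul_comm _ _⟩
  inj' := by
    rintro ⟨i, j⟩ ⟨i', j'⟩ h
    simp only [Fin.mk.injEq] at h
    obtain ⟨h1, h2⟩ := key_uniq (Nat.lt_succ_of_lt i.isLt) (Nat.lt_succ_of_lt i'.isLt) h
    exact Prod.ext (Fin.ext h2) (Fin.ext h1)

def embB (m n : ℕ) : Fin ((m + 1) * n) ↪ Fin (m + 1) × Fin n where
  toFun k := (⟨k.val % (m + 1), Nat.mod_lt _ (Nat.succ_pos m)⟩,
    ⟨k.val / (m + 1), Nat.div_lt_of_lt_mul k.isLt⟩)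
  inj' := by
    rintro k k' h
    simp only [Prod.mk.injEq, Fin.mk.injEq] at h
    have h1 := Nat.div_add_mod k.val (m + 1)
    have h2 := Nat.div_add_mod k'.val (m + 1)
    apply Fin.ext
    rw [← h1, ← h2, h.1, h.2]

lemma gridAdj_of_rel {m n : ℕ} (i i' : Fin m) (j j' : Fin n)
    (h : j.val * (m + 1) + i.val + 1 = j'.val * (m + 1) + i'.val ∨
         j.val * (m + 1) + i.val + (m + 1) = j'.val * (m + 1) + i'.val) :
    (pathGraph m □ pathGraph n).Adj (i, j) (i', j') := by
  rw [boxProd_adj]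
  rcases h with h | h
  · obtain ⟨hj, hi⟩ := key_uniq (M := m + 1) (Nat.succ_lt_succ i.isLt)
      (Nat.lt_succ_of_lt i'.isLt)
      (show j.val * (m + 1) + (i.val + 1) = j'.val * (m + 1) + i'.val by linarith)
    exact Or.inl ⟨pathGraph_adj.mpr (Or.inl hi), Fin.ext hj⟩
  · obtain ⟨hj, hi⟩ := key_uniq (M := m + 1) (Nat.lt_succ_of_lt i.isLt)
      (Nat.lt_succ_of_lt i'.isLt)
      (show (j.val + 1) * (m + 1) + i.val = j'.val * (m + 1) + i'.val by
        rw [Nat.add_mul, Nat.one_mul]; linarith)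
    exact Or.inr ⟨pathGraph_adj.mpr (Or.inl hj), Fin.ext hi⟩

lemma twistAdj_of_grid {m n : ℕ} (k k' : Fin ((m + 1) * n))
    (hadj : (pathGraph (m + 1) □ pathGraph n).Adj (embB m n k) (embB m n k')) :
    (twistGrid (m + 1) n).Adj k k' := by
  rw [twistGrid, fromRel_adj]
  have hk := Nat.div_add_mod k.val (m + 1)
  have hk' := Nat.div_add_mod k'.val (m + 1)
  rw [boxProd_adj] at hadj
  simp only [embB, ← Function.Embedding.toFun_eq_coe, pathGraph_adj, Fin.mk.injEq] at hadj
  rcases hadj with ⟨hM, hd⟩ | ⟨hN, ha⟩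
  · rw [hd] at hk
    generalize (m + 1) * (k'.val / (m + 1)) = X at hk hk'
    generalize k.val % (m + 1) = a at hk hM
    generalize k'.val % (m + 1) = b at hk' hM
    have hv : k.val + 1 = k'.val ∨ k'.val + 1 = k.val := by omega
    refine ⟨fun he => ?_, Or.imp (fun h => Or.inl h) (fun h => Or.inl h) hv⟩
    have := congrArg Fin.val he
    omega
  · rw [ha] at hk
    rcases hN with h | h
    · rw [← h, Nat.mul_add, Nat.mul_one] at hk'
      generalize (m + 1) * (k.val / (m + 1)) = X at hk hk'
      generalize k'.val % (m + 1) = a at hk hk'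
      refine ⟨fun he => ?_, Or.inl (Or.inr (by omega))⟩
      have := congrArg Fin.val he
      omega
    · rw [← h, Nat.mul_add, Nat.mul_one] at hk
      generalize (m + 1) * (k'.val / (m + 1)) = X at hk hk'
      generalize k'.val % (m + 1) = a at hk hk'
      refine ⟨fun he => ?_, Or.inr (Or.inr (by omega))⟩
      have := congrArg Fin.val he
      omega

theorem grid_le_twist_le_grid (m n : ℕ) (hm : 2 ≤ m) (hn : 1 ≤ n) :
    gridN m n ≤ twistGamma (m + 1) n ∧ twistGamma (m + 1) n ≤ gridN (m + 1) n := by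
  unfold gridN twistGamma
  constructor
  · refine numIndep_le_of_emb _ _ (embA m n) ?_
    rintro ⟨i, j⟩ ⟨i', j'⟩ hadj
    rw [twistGrid, fromRel_adj] at hadj
    obtain ⟨hne, h | h⟩ := hadj
    · exact gridAdj_of_rel i i' j j' (by simpa [embA, ← Function.Embedding.toFun_eq_coe] using h)
    · exact (gridAdj_of_rel i' i j' j (by simpa [embA, ← Function.Embedding.toFun_eq_coe] using h)).symm
  · exact numIndep_le_of_emb _ _ (embB m n) (fun k k' h => twistAdj_of_grid k k' h)
end

section
/- For all integers m ≥ 3 and all positive integers a, b, the number of independent sets of the m×n cylindrical grid graph satisfies both C(m, a+b) ≤ C(m,a) · C(m,b) and C(m,a) · C(m,b) ≤ C(m, a+b+1) (vertical cutting and splicing with an inserted ring of unselected vertices). -/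
open SimpleGraph Filter Real Topology

theorem cyl_cut_and_splice (m a b : ℕ) (hm : 3 ≤ m) (ha : 0 < a) (hb : 0 < b) :
    cylC m (a + b) ≤ cylC m a * cylC m b ∧
    cylC m a * cylC m b ≤ cylC m (a + b + 1) := by
  classical
  unfold cylC numIndep
  constructor
  · -- cut
    rw [← Finset.card_product]
    apply Finset.card_le_card_of_injOn
      (fun S => (Finset.univ.filter fun p : Fin m × Fin a => (p.1, Fin.castAdd b p.2) ∈ S,
                 Finset.univ.filter fun p : Fin m × Fin b => (p.1, Fin.natAdd a p.2) ∈ S))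
    · intro S hS
      simp only [Finset.mem_coe, Finset.mem_filter, Finset.mem_univ, true_and] at hS
      simp only [Finset.mem_coe, Finset.mem_product, Finset.mem_filter, Finset.mem_univ, true_and]
      constructor
      · intro u hu v hv hadj
        refine hS _ hu _ hv ?_
        simp only [boxProd_adj] at hadj ⊢
        rcases hadj with ⟨h1, h2⟩ | ⟨h1, h2⟩
        · exact Or.inl ⟨h1, congrArg (Fin.castAdd b) h2⟩
        · refine Or.inr ⟨?_, h2⟩
          rw [pathGraph_adj] at h1 ⊢
          simpa using h1
      · intro u hu v hv hadj
        refine hS _ hu _ hv ?_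
        simp only [boxProd_adj] at hadj ⊢
        rcases hadj with ⟨h1, h2⟩ | ⟨h1, h2⟩
        · exact Or.inl ⟨h1, congrArg (Fin.natAdd a) h2⟩
        · refine Or.inr ⟨?_, h2⟩
          rw [pathGraph_adj] at h1 ⊢
          simp only [Fin.coe_natAdd]
          omega
    · intro S _ T _ h
      simp only [Prod.mk.injEq] at h
      obtain ⟨h1, h2⟩ := h
      ext ⟨i, j⟩
      by_cases hj : (j : ℕ) < a
      · have := Finset.ext_iff.mp h1 (i, ⟨j, hj⟩)
        simp only [Finset.mem_filter, Finset.mem_univ, true_and] at this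
        have hje : (Fin.castAdd b (⟨j, hj⟩ : Fin a)) = j := by
          simp [Fin.ext_iff]
        rwa [hje] at this
      · have hja : a ≤ (j : ℕ) := by omega
        have hjb : (j : ℕ) - a < b := by omega
        have := Finset.ext_iff.mp h2 (i, ⟨(j : ℕ) - a, hjb⟩)
        simp only [Finset.mem_filter, Finset.mem_univ, true_and] at this
        have hje : (Fin.natAdd a (⟨(j : ℕ) - a, hjb⟩ : Fin b)) = j := by
          simp [Fin.ext_iff]; omega
        rwa [hje] at this
  · -- splice
    rw [← Finset.card_product]
    have hlt1 : ∀ j : Fin a, (j : ℕ) < a + b + 1 := fun j => by omega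
    have hlt2 : ∀ j : Fin b, a + 1 + (j : ℕ) < a + b + 1 := fun j => by omega
    apply Finset.card_le_card_of_injOn
      (fun P => (P.1.image fun p : Fin m × Fin a => (p.1, (⟨p.2, hlt1 p.2⟩ : Fin (a + b + 1)))) ∪
                (P.2.image fun p : Fin m × Fin b =>
                  (p.1, (⟨a + 1 + p.2, hlt2 p.2⟩ : Fin (a + b + 1)))))
    · rintro ⟨S, T⟩ hP
      simp only [Finset.mem_coe, Finset.mem_product, Finset.mem_filter, Finset.mem_univ, true_and] at hP
      obtain ⟨hS, hT⟩ := hP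
      simp only [Finset.mem_coe, Finset.mem_filter, Finset.mem_univ, true_and]
      intro u hu v hv hadj
      simp only [Finset.mem_union, Finset.mem_image] at hu hv
      rcases hu with ⟨p, hp, hpe⟩ | ⟨p, hp, hpe⟩ <;>
        rcases hv with ⟨q, hq, hqe⟩ | ⟨q, hq, hqe⟩ <;>
        subst hpe <;> subst hqe <;>
        simp only [boxProd_adj, pathGraph_adj] at hadj
      · refine hS _ hp _ hq ?_
        simp only [boxProd_adj, pathGraph_adj]
        rcases hadj with ⟨h1, h2⟩ | ⟨h1, h2⟩
        · refine Or.inl ⟨h1, Fin.ext ?_⟩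
          injection h2 with h2v
        · refine Or.inr ⟨?_, h2⟩
          have h1' : ((p.2 : ℕ) + 1 = (q.2 : ℕ)) ∨ ((q.2 : ℕ) + 1 = (p.2 : ℕ)) := h1
          exact h1'
      · exfalso
        rcases hadj with ⟨-, h2⟩ | ⟨h1, -⟩
        · have h2' : (p.2 : ℕ) = a + 1 + (q.2 : ℕ) := congrArg Fin.val h2
          have := p.2.isLt; omega
        · have h1' : ((p.2 : ℕ) + 1 = a + 1 + (q.2 : ℕ)) ∨ (a + 1 + (q.2 : ℕ) + 1 = (p.2 : ℕ)) := h1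
          have := p.2.isLt; omega
      · exfalso
        rcases hadj with ⟨-, h2⟩ | ⟨h1, -⟩
        · have h2' : a + 1 + (p.2 : ℕ) = (q.2 : ℕ) := congrArg Fin.val h2
          have := q.2.isLt; omega
        · have h1' : (a + 1 + (p.2 : ℕ) + 1 = (q.2 : ℕ)) ∨ ((q.2 : ℕ) + 1 = a + 1 + (p.2 : ℕ)) := h1
          have := q.2.isLt; omega
      · refine hT _ hp _ hq ?_
        simp only [boxProd_adj, pathGraph_adj]
        rcases hadj with ⟨h1, h2⟩ | ⟨h1, h2⟩
        · refine Or.inl ⟨h1, Fin.ext ?_⟩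
          have h2' : a + 1 + (p.2 : ℕ) = a + 1 + (q.2 : ℕ) := congrArg Fin.val h2
          omega
        · refine Or.inr ⟨?_, h2⟩
          have h1' : (a + 1 + (p.2 : ℕ) + 1 = a + 1 + (q.2 : ℕ)) ∨
              (a + 1 + (q.2 : ℕ) + 1 = a + 1 + (p.2 : ℕ)) := h1
          omega
    · rintro ⟨S, T⟩ _ ⟨S', T'⟩ _ h
      dsimp only at h
      simp only [Prod.mk.injEq]
      have key := fun x : Fin m × Fin (a + b + 1) => Finset.ext_iff.mp h x
      constructor
      · ext ⟨i, j⟩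
        have hx := key (i, ⟨j, hlt1 j⟩)
        simp only [Finset.mem_union, Finset.mem_image, Prod.mk.injEq, Fin.ext_iff] at hx
        constructor
        · intro hmem
          rcases hx.mp (Or.inl ⟨(i, j), hmem, rfl, rfl⟩) with
            ⟨⟨pi, pj⟩, hp, h1, h2⟩ | ⟨⟨pi, pj⟩, hp, h1, h2⟩
          · obtain rfl : pi = i := Fin.ext h1
            obtain rfl : pj = j := Fin.ext h2
            exact hp
          · exfalso; have := pj.isLt; have := j.isLt; omega
        · intro hmem
          rcases hx.mpr (Or.inl ⟨(i, j), hmem, rfl, rfl⟩) with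
            ⟨⟨pi, pj⟩, hp, h1, h2⟩ | ⟨⟨pi, pj⟩, hp, h1, h2⟩
          · obtain rfl : pi = i := Fin.ext h1
            obtain rfl : pj = j := Fin.ext h2
            exact hp
          · exfalso; have := pj.isLt; have := j.isLt; omega
      · ext ⟨i, j⟩
        have hx := key (i, ⟨a + 1 + j, hlt2 j⟩)
        simp only [Finset.mem_union, Finset.mem_image, Prod.mk.injEq, Fin.ext_iff] at hx
        constructor
        · intro hmem
          rcases hx.mp (Or.inr ⟨(i, j), hmem, rfl, rfl⟩) with
            ⟨⟨pi, pj⟩, hp, h1, h2⟩ | ⟨⟨pi, pj⟩, hp, h1, h2⟩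
          · exfalso
            have h2' : (pj : ℕ) = a + 1 + (j : ℕ) := h2
            have := pj.isLt; omega
          · have h2' : a + 1 + (pj : ℕ) = a + 1 + (j : ℕ) := h2
            obtain rfl : pi = i := Fin.ext h1
            obtain rfl : pj = j := Fin.ext (by omega)
            exact hp
        · intro hmem
          rcases hx.mpr (Or.inr ⟨(i, j), hmem, rfl, rfl⟩) with
            ⟨⟨pi, pj⟩, hp, h1, h2⟩ | ⟨⟨pi, pj⟩, hp, h1, h2⟩
          · exfalso
            have h2' : (pj : ℕ) = a + 1 + (j : ℕ) := h2
            have := pj.isLt; omega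
          · have h2' : a + 1 + (pj : ℕ) = a + 1 + (j : ℕ) := h2
            obtain rfl : pi = i := Fin.ext h1
            obtain rfl : pj = j := Fin.ext (by omega)
            exact hp
end

section
/- Suppose f, f_C and f_Γ are real numbers such that, along the product filter atTop on ℕ × ℕ (i.e., as m and n both tend to infinity), (m,n) ↦ ln N(m,n)/(m·n) tends to f, (m,n) ↦ ln C(m,n)/(m·n) tends to f_C, and (m,n) ↦ ln Γ(m,n)/(m·n) tends to f_Γ. Then f = f_C = f_Γ. -/
open SimpleGraph Filter Real Topology

open Classical in
lemma numIndep_anti {V : Type*} [Fintype V] {G H : SimpleGraph V} (h : G ≤ H) :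
    numIndep H ≤ numIndep G := by
  classical
  apply Finset.card_le_card
  intro s hs
  simp only [Finset.mem_filter, Finset.mem_univ, true_and] at hs ⊢
  exact fun u hu v hv hadj => hs u hu v hv (h hadj)

open Classical in
lemma numIndep_le_of_map {V W : Type*} [Fintype V] [Fintype W]
    (G : SimpleGraph V) (H : SimpleGraph W) (φ : V ↪ W)
    (h : ∀ u v, H.Adj (φ u) (φ v) → G.Adj u v) :
    numIndep G ≤ numIndep H := by
  classical
  apply Finset.card_le_card_of_injOn (fun s => s.map φ)
  · intro s hs
    simp only [Finset.mem_coe, Finset.mem_filter, Finset.mem_univ, true_and] at hs ⊢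
    rintro u hu v hv hadj
    simp only [Finset.mem_map] at hu hv
    obtain ⟨a, ha, rfl⟩ := hu
    obtain ⟨b, hb, rfl⟩ := hv
    exact hs a ha b hb (h a b hadj)
  · intro s _ t _ hst
    exact Finset.map_injective φ hst


-- boxProd monotone in first argument
lemma boxProd_mono_left {α β : Type*} {G G' : SimpleGraph α} (H : SimpleGraph β)
    (h : G ≤ G') : (G □ H) ≤ (G' □ H) := by
  rintro ⟨a, b⟩ ⟨c, d⟩ hadj
  rw [boxProd_adj] at hadj ⊢
  rcases hadj with ⟨h1, h2⟩ | h1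
  · exact Or.inl ⟨h h1, h2⟩
  · exact Or.inr h1

lemma cycle_castSucc {m : ℕ} {i j : Fin m}
    (h : (cycleGraph (m + 1)).Adj i.castSucc j.castSucc) : (pathGraph m).Adj i j := by
  rw [cycleGraph_adj'] at h
  rw [pathGraph_adj]
  rcases h with h | h
  · rcases le_or_gt j.castSucc i.castSucc with hle | hlt
    · rw [Fin.coe_sub_iff_le.mpr hle] at h
      right
      simp only [Fin.coe_castSucc] at h
      omega
    · rw [Fin.coe_sub_iff_lt.mpr hlt] at h
      simp only [Fin.coe_castSucc] at h
      have := i.isLt; have := j.isLt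
      omega
  · rcases le_or_gt i.castSucc j.castSucc with hle | hlt
    · rw [Fin.coe_sub_iff_le.mpr hle] at h
      left
      simp only [Fin.coe_castSucc] at h
      omega
    · rw [Fin.coe_sub_iff_lt.mpr hlt] at h
      simp only [Fin.coe_castSucc] at h
      have := i.isLt; have := j.isLt
      omega

-- uniqueness of base-k representation
lemma rep_unique {k i j r s : ℕ} (hi : i < k) (hj : j < k)
    (h : i + k * r = j + k * s) : i = j ∧ r = s := by
  have h1 : (i + k * r) % k = i := by
    rw [Nat.add_mul_mod_self_left, Nat.mod_eq_of_lt hi]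
  have h2 : (j + k * s) % k = j := by
    rw [Nat.add_mul_mod_self_left, Nat.mod_eq_of_lt hj]
  have h3 : (i + k * r) / k = r := by
    rw [Nat.add_mul_div_left _ _ (by omega : 0 < k), Nat.div_eq_of_lt hi]
    omega
  have h4 : (j + k * s) / k = s := by
    rw [Nat.add_mul_div_left _ _ (by omega : 0 < k), Nat.div_eq_of_lt hj]
    omega
  constructor
  · rw [← h1, ← h2, h]
  · rw [← h3, ← h4, h]

lemma cyl_le_grid (m n : ℕ) : cylC m n ≤ gridN m n :=
  numIndep_anti (boxProd_mono_left _ pathGraph_le_cycleGraph)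

lemma grid_le_cyl (m n : ℕ) : gridN m n ≤ cylC (m + 1) n := by
  apply numIndep_le_of_map _ _ ((Fin.castSuccEmb).prodMap (Function.Embedding.refl _))
  rintro ⟨i, r⟩ ⟨j, s⟩ hadj
  rw [boxProd_adj] at hadj ⊢
  simp only [Function.Embedding.coe_prodMap, Fin.castSuccEmb_apply,
    Function.Embedding.refl_apply, Prod.map] at hadj
  rcases hadj with ⟨h1, h2⟩ | ⟨h1, h2⟩
  · exact Or.inl ⟨cycle_castSucc h1, h2⟩
  · exact Or.inr ⟨h1, Fin.castSucc_injective _ h2⟩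

lemma twist_le_grid (m n : ℕ) (hm : 0 < m) : twistGamma m n ≤ gridN m n := by
  have hdiv : ∀ i : Fin (m * n), i.val / m < n := fun i =>
    Nat.div_lt_of_lt_mul i.isLt
  have hinj : Function.Injective
      (fun i : Fin (m * n) => ((⟨i.val % m, Nat.mod_lt _ hm⟩ : Fin m),
        (⟨i.val / m, hdiv i⟩ : Fin n))) := by
    intro i j hij
    simp only [Prod.mk.injEq, Fin.mk.injEq] at hij
    have hi := Nat.div_add_mod i.val m
    have hj := Nat.div_add_mod j.val m
    rw [hij.1, hij.2] at hi
    exact Fin.ext (by omega)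
  apply numIndep_le_of_map _ _ ⟨_, hinj⟩
  rintro i j hadj
  rw [boxProd_adj] at hadj
  rw [twistGrid, fromRel_adj]
  have hi := Nat.div_add_mod i.val m
  have hj := Nat.div_add_mod j.val m
  simp only [Function.Embedding.coeFn_mk, pathGraph_adj, Prod.mk.injEq, Fin.mk.injEq] at hadj
  have hne : i ≠ j := by
    rintro rfl
    rcases hadj with ⟨h1, _⟩ | ⟨h1, _⟩ <;> omega
  refine ⟨hne, ?_⟩
  have hne2 : i.val ≠ j.val := fun hv => hne (Fin.ext hv)
  rcases hadj with ⟨h1, h2⟩ | ⟨h1, h2⟩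
  · -- mod differs by 1, div equal
    rcases h1 with h1 | h1 <;>
    · generalize hx : m * (i.val / m) = x at hi
      rw [h2] at hx
      rw [hx] at hj
      omega
  · -- div differs by 1, mod equal
    rcases h1 with h1 | h1
    · have key : m * (j.val / m) = m * (i.val / m) + m := by
        rw [← h1, Nat.mul_add, Nat.mul_one]
      generalize hx : m * (i.val / m) = x at hi key
      generalize hy : m * (j.val / m) = y at hj key
      omega
    · have key : m * (i.val / m) = m * (j.val / m) + m := by
        rw [← h1, Nat.mul_add, Nat.mul_one]
      generalize hx : m * (i.val / m) = x at hi key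
      generalize hy : m * (j.val / m) = y at hj key
      omega

lemma grid_le_twist (m n : ℕ) : gridN m n ≤ twistGamma (m + 1) n := by
  have hlt : ∀ (i : Fin m) (r : Fin n), i.val + (m + 1) * r.val < (m + 1) * n := by
    intro i r
    calc i.val + (m + 1) * r.val < (m + 1) + (m + 1) * r.val := by have := i.isLt; omega
    _ = (m + 1) * (r.val + 1) := by ring
    _ ≤ (m + 1) * n := Nat.mul_le_mul_left _ r.isLt
  have hinj : Function.Injective (fun p : Fin m × Fin n =>
      (⟨p.1.val + (m + 1) * p.2.val, hlt p.1 p.2⟩ : Fin ((m + 1) * n))) := by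
    rintro ⟨i, r⟩ ⟨j, s⟩ h
    simp only [Fin.mk.injEq] at h
    have := rep_unique (k := m + 1) (by omega : i.val < m + 1) (by omega : j.val < m + 1) h
    simp only [Prod.mk.injEq]
    exact ⟨Fin.ext this.1, Fin.ext this.2⟩
  apply numIndep_le_of_map _ _ ⟨_, hinj⟩
  rintro ⟨i, r⟩ ⟨j, s⟩ hadj
  rw [twistGrid, fromRel_adj] at hadj
  rw [boxProd_adj]
  obtain ⟨hne, hrel⟩ := hadj
  simp only [Function.Embedding.coeFn_mk] at hrel
  simp only [pathGraph_adj]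
  have hi := i.isLt; have hj := j.isLt; have hrn := r.isLt; have hsn := s.isLt
  rcases hrel with (h | h) | (h | h)
  · have := rep_unique (k := m + 1) (i := i.val + 1) (j := j.val) (by omega) (by omega)
      (by omega : i.val + 1 + (m+1) * r.val = j.val + (m+1) * s.val)
    exact Or.inl ⟨Or.inl this.1, Fin.ext this.2⟩
  · have := rep_unique (k := m + 1) (i := i.val) (j := j.val) (by omega) (by omega)
      (by rw [Nat.mul_add, Nat.mul_one]; omega :
        i.val + (m+1) * (r.val + 1) = j.val + (m+1) * s.val)
    exact Or.inr ⟨Or.inl (by omega), Fin.ext this.1⟩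
  · have := rep_unique (k := m + 1) (i := j.val + 1) (j := i.val) (by omega) (by omega)
      (by omega : j.val + 1 + (m+1) * s.val = i.val + (m+1) * r.val)
    exact Or.inl ⟨Or.inr this.1, Fin.ext this.2.symm⟩
  · have := rep_unique (k := m + 1) (i := j.val) (j := i.val) (by omega) (by omega)
      (by rw [Nat.mul_add, Nat.mul_one]; omega :
        j.val + (m+1) * (s.val + 1) = i.val + (m+1) * r.val)
    exact Or.inr ⟨Or.inr (by omega), Fin.ext this.1.symm⟩


lemma nat_ratio_tendsto : Tendsto (fun m : ℕ => ((m : ℝ) + 1) / m) atTop (𝓝 1) := by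
  have h : Tendsto (fun m : ℕ => 1 + 1 / (m : ℝ)) atTop (𝓝 (1 + 0)) :=
    tendsto_const_nhds.add (tendsto_one_div_atTop_nhds_zero_nat)
  rw [add_zero] at h
  apply h.congr'
  filter_upwards [eventually_ge_atTop 1] with m hm
  have : (m : ℝ) ≠ 0 := by positivity
  field_simp

lemma shift_tendsto {X : ℕ → ℕ → ℕ} {c : ℝ}
    (h : Tendsto (fun p : ℕ × ℕ => Real.log (X p.1 p.2) / ((p.1 : ℝ) * (p.2 : ℝ)))
      atTop (𝓝 c)) :
    Tendsto (fun p : ℕ × ℕ => Real.log (X (p.1 + 1) p.2) / ((p.1 : ℝ) * (p.2 : ℝ)))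
      atTop (𝓝 c) := by
  have hfst : Tendsto (Prod.fst : ℕ × ℕ → ℕ) atTop atTop := by
    rw [← prod_atTop_atTop_eq]; exact tendsto_fst
  have hmap : Tendsto (fun p : ℕ × ℕ => (p.1 + 1, p.2)) (atTop : Filter (ℕ × ℕ)) atTop := by
    rw [← prod_atTop_atTop_eq]
    refine Tendsto.prodMk ?_ tendsto_snd
    exact tendsto_atTop_mono (fun p => Nat.le_succ_of_le le_rfl) tendsto_fst
  have h1 := h.comp hmap
  have h2 : Tendsto (fun p : ℕ × ℕ => ((p.1 : ℝ) + 1) / p.1) atTop (𝓝 1) :=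
    nat_ratio_tendsto.comp hfst
  have h3 := h1.mul h2
  rw [mul_one] at h3
  apply h3.congr'
  filter_upwards [eventually_ge_atTop ((1, 1) : ℕ × ℕ)] with p hp
  obtain ⟨h1', h2'⟩ := Prod.le_def.mp hp
  have hp1 : (p.1 : ℝ) ≠ 0 := Nat.cast_ne_zero.2 (by omega)
  have hp2 : (p.2 : ℝ) ≠ 0 := Nat.cast_ne_zero.2 (by omega)
  have hp3 : (p.1 : ℝ) + 1 ≠ 0 := by positivity
  simp only [Function.comp]
  push_cast
  field_simp

open Classical in
lemma numIndep_pos {V : Type*} [Fintype V] (G : SimpleGraph V) : 0 < numIndep G := by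
  classical
  apply Finset.card_pos.mpr
  exact ⟨∅, by simp⟩

lemma lim_le {A B : ℕ → ℕ → ℕ} {a b : ℝ}
    (ha : Tendsto (fun p : ℕ × ℕ =>
      Real.log (A p.1 p.2) / ((p.1 : ℝ) * (p.2 : ℝ))) atTop (𝓝 a))
    (hb : Tendsto (fun p : ℕ × ℕ =>
      Real.log (B p.1 p.2) / ((p.1 : ℝ) * (p.2 : ℝ))) atTop (𝓝 b))
    (hAB : ∀ m n : ℕ, 1 ≤ m → 1 ≤ n → A m n ≤ B m n)
    (hApos : ∀ m n : ℕ, 0 < A m n) : a ≤ b := by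
  refine le_of_tendsto_of_tendsto ha hb ?_
  filter_upwards [eventually_ge_atTop ((1, 1) : ℕ × ℕ)] with p hp
  obtain ⟨h1, h2⟩ := Prod.le_def.mp hp
  have hD : (0 : ℝ) < (p.1 : ℝ) * (p.2 : ℝ) := by
    have : (0:ℝ) < (p.1 : ℝ) := by exact_mod_cast Nat.lt_of_lt_of_le Nat.zero_lt_one h1
    have : (0:ℝ) < (p.2 : ℝ) := by exact_mod_cast Nat.lt_of_lt_of_le Nat.zero_lt_one h2
    positivity
  have hlog : Real.log (A p.1 p.2) ≤ Real.log (B p.1 p.2) := by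
    apply Real.log_le_log
    · exact_mod_cast hApos p.1 p.2
    · exact_mod_cast hAB p.1 p.2 h1 h2
  exact div_le_div_of_nonneg_right hlog hD.le |>.trans_eq rfl

theorem free_energies_equal (f fC fΓ : ℝ)
    (hf : Tendsto (fun p : ℕ × ℕ =>
        Real.log (gridN p.1 p.2) / ((p.1 : ℝ) * (p.2 : ℝ))) atTop (𝓝 f))
    (hfC : Tendsto (fun p : ℕ × ℕ =>
        Real.log (cylC p.1 p.2) / ((p.1 : ℝ) * (p.2 : ℝ))) atTop (𝓝 fC))
    (hfΓ : Tendsto (fun p : ℕ × ℕ =>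
        Real.log (twistGamma p.1 p.2) / ((p.1 : ℝ) * (p.2 : ℝ))) atTop (𝓝 fΓ)) :
    f = fC ∧ fC = fΓ := by
  have hfΓ' := shift_tendsto (X := twistGamma) hfΓ
  have hfC' := shift_tendsto (X := cylC) hfC
  have hC_le_f : fC ≤ f :=
    lim_le (A := cylC) (B := gridN) hfC hf (fun m n _ _ => cyl_le_grid m n) (fun m n => numIndep_pos _)
  have hf_le_C : f ≤ fC :=
    lim_le (A := gridN) (B := fun m n => cylC (m+1) n) hf hfC' (fun m n _ _ => grid_le_cyl m n) (fun m n => numIndep_pos _)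
  have hΓ_le_f : fΓ ≤ f :=
    lim_le (A := twistGamma) (B := gridN) hfΓ hf (fun m n hm _ => twist_le_grid m n hm) (fun m n => numIndep_pos _)
  have hf_le_Γ : f ≤ fΓ :=
    lim_le (A := gridN) (B := fun m n => twistGamma (m+1) n) hf hfΓ' (fun m n _ _ => grid_le_twist m n) (fun m n => numIndep_pos _)
  have e1 : f = fC := le_antisymm hf_le_C hC_le_f
  have e2 : f = fΓ := le_antisymm hf_le_Γ hΓ_le_f
  exact ⟨e1, e1 ▸ e2⟩
end
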